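/- arXiv:1312.7248 — 2 statements merged into one kernel-verified Lean document; each statement's English description precedes it below -/
import Mathlib

section
/- Let s(z) = γ·∏_{i=1}^{m₁}(z−a_i) / ∏_{j=1}^{m₂}(z−b_j) with γ ≠ 0 and pairwise distinct real numbers a₁,…,a_{m₁}, b₁,…,b_{m₂} (in particular a_i ≠ b_j). For c ∈ ℝ let η_c(s) denote the number of zeros and poles of s strictly greater than c, and set π_i := (1 − (−1)^{η_{a_i}(s)}·sgn(γ))/2 ∈ {0,1} and κ_j := (1 + (−1)^{η_{b_j}(s)}·sgn(γ))/2 ∈ {0,1}. Then: (1) π_i = 1 if and only if lim_{z→a_i} s(z)/(z−a_i) < 0, and κ_j = 1 if and only if lim_{z→b_j} (z−b_j)s(z) > 0; (2) the rational function s₀(z) := γ·∏_i (z−a_i)^{1−2π_i} / ∏_j (z−b_j)^{1−2κ_j} restricts on ℂ∖ℝ to a Nevanlinna function; (3) s = ψ·s₀, where ψ(z) := ∏_i (z−a_i)^{2π_i} / ∏_j (z−b_j)^{2κ_j} is nonnegative on ℝ (outside its poles). -/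
open MeasureTheory Filter Set Topology

noncomputable section

/-- A (scalar) Nevanlinna function: holomorphic off the reals, symmetric with respect to
complex conjugation, and mapping the upper half-plane into its closure. -/
structure IsNevanlinna (Q : ℂ → ℂ) : Prop where
  holo : DifferentiableOn ℂ Q {z : ℂ | z.im ≠ 0}
  symm : ∀ z : ℂ, z.im ≠ 0 → Q ((starRingEnd ℂ) z) = (starRingEnd ℂ) (Q z)
  herglotz : ∀ z : ℂ, z.im ≠ 0 → 0 ≤ (Q z).im * z.im

/-- `Q` extends holomorphically across the real point `x` (i.e. `x ∈ ρ(Q)`). -/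
def HoloAtReal (Q : ℂ → ℂ) (x : ℝ) : Prop :=
  ∃ (U : Set ℂ) (G : ℂ → ℂ), IsOpen U ∧ (x : ℂ) ∈ U ∧
    DifferentiableOn ℂ G U ∧ ∀ z ∈ U, z.im ≠ 0 → G z = Q z

/-- The finite part of the set `σ(Q) = ℝ ∖ ρ(Q)`. -/
def nevSpec (Q : ℂ → ℂ) : Set ℝ := {x : ℝ | ¬ HoloAtReal Q x}

/-- Boundary value of `Q` at a real point, obtained as limit from the upper half-plane
(junk value if the limit does not exist). -/
def nevBdry (Q : ℂ → ℂ) (x : ℝ) : ℝ :=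
  (limUnder (nhdsWithin (0 : ℝ) (Set.Ioi 0))
    (fun y : ℝ => Q ((x : ℂ) + (y : ℂ) * Complex.I))).re

/-- The Herglotz–Nevanlinna integral representation of `Q` with data `(α, β, σ)`. -/
def IsNevRep (Q : ℂ → ℂ) (α β : ℝ) (σ : Measure ℝ) : Prop :=
  0 ≤ β ∧ (∫⁻ t, ENNReal.ofReal ((1 + t ^ 2)⁻¹) ∂σ) ≠ ⊤ ∧
    ∀ z : ℂ, z.im ≠ 0 →
      Q z = (α : ℂ) + (β : ℂ) * z +
        ∫ t, (((t : ℂ) - z)⁻¹ - (t : ℂ) / (1 + (t : ℂ) ^ 2)) ∂σ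

/-- Stolz sector at a real boundary point. -/
def upperSector (ξ α : ℝ) : Set ℂ := {z : ℂ | 0 < z.im ∧ α * |z.re - ξ| ≤ z.im}

/-- Nontangential (sectorial) limit of `f` at the real point `ξ`. -/
def SecLim (f : ℂ → ℂ) (ξ : ℝ) (L : ℂ) : Prop :=
  ∀ α : ℝ, 0 < α → Tendsto f (nhdsWithin (ξ : ℂ) (upperSector ξ α)) (nhds L)

/-- Nontangential limit `+∞` (of the real parts) at the real point `ξ`. -/
def SecLimTop (f : ℂ → ℂ) (ξ : ℝ) : Prop :=
  ∀ α : ℝ, 0 < α →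
    Tendsto (fun z => (f z).re) (nhdsWithin (ξ : ℂ) (upperSector ξ α)) atTop

/-- Nontangential limit `-∞` (of the real parts) at the real point `ξ`. -/
def SecLimBot (f : ℂ → ℂ) (ξ : ℝ) : Prop :=
  ∀ α : ℝ, 0 < α →
    Tendsto (fun z => (f z).re) (nhdsWithin (ξ : ℂ) (upperSector ξ α)) atBot

/-- The sectorial approach filter to `∞` in the upper half-plane. -/
def inftySector (α : ℝ) : Filter ℂ :=
  (Filter.comap (fun z : ℂ => ‖z‖) Filter.atTop) ⊓
    Filter.principal {z : ℂ | 0 < z.im ∧ α * |z.re| ≤ z.im}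

/-- Sectorial limit of `f` at `∞`. -/
def SecLimInfty (f : ℂ → ℂ) (L : ℂ) : Prop :=
  ∀ α : ℝ, 0 < α → Tendsto f (inftySector α) (nhds L)

/-- The Kac–Donoghue class `N(ξ,1)`, `ξ ∈ ℝ`. -/
def InKacClass (Q : ℂ → ℂ) (ξ : ℝ) : Prop :=
  IsNevanlinna Q ∧
    MeasureTheory.IntegrableOn
      (fun y : ℝ => (Q ((ξ : ℂ) + (y : ℂ) * Complex.I)).im / y) (Set.Ioc 0 1)

/-- The Kac class `N(∞,1)`. -/
def InKacClassInfty (Q : ℂ → ℂ) : Prop :=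
  IsNevanlinna Q ∧
    MeasureTheory.IntegrableOn
      (fun y : ℝ => (Q ((y : ℂ) * Complex.I)).im / y) (Set.Ici 1)

/-- `Q` extends holomorphically across `x` with value `0` at `x` (a real zero of `Q`). -/
def RealZeroOf (Q : ℂ → ℂ) (x : ℝ) : Prop :=
  ∃ (U : Set ℂ) (G : ℂ → ℂ), IsOpen U ∧ (x : ℂ) ∈ U ∧
    DifferentiableOn ℂ G U ∧ (∀ z ∈ U, z.im ≠ 0 → G z = Q z) ∧ G (x : ℂ) = 0

/-- `Q` has an isolated pole at the real point `x`. -/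
def IsolatedPoleAtReal (Q : ℂ → ℂ) (x : ℝ) : Prop :=
  ∃ (U : Set ℂ) (G : ℂ → ℂ), IsOpen U ∧ (x : ℂ) ∈ U ∧
    DifferentiableOn ℂ G (U \ {(x : ℂ)}) ∧ (∀ z ∈ U, z.im ≠ 0 → G z = Q z) ∧
    Tendsto (fun z => ‖G z‖) (nhdsWithin (x : ℂ) {(x : ℂ)}ᶜ) atTop

/-- The Nevanlinna kernel of `Q`. -/
def nevKernel (Q : ℂ → ℂ) (z w : ℂ) : ℂ :=
  (Q z - (starRingEnd ℂ) (Q w)) / (z - (starRingEnd ℂ) w)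

/-- The value of the Hermitian form attached to the kernel `K` at the sample points `z`
on the coefficient vector `v`. -/
def hermFormRe (K : ℂ → ℂ → ℂ) {n : ℕ} (z v : Fin n → ℂ) : ℝ :=
  (∑ i, ∑ j, v i * (starRingEnd ℂ) (v j) * K (z i) (z j)).re

/-- The kernel `K` has at most `κ` negative squares on `dom`: every `κ+1`-dimensional
space of coefficient vectors contains a nonzero vector on which the Hermitian form
is nonnegative. -/
def NegSquaresLE (K : ℂ → ℂ → ℂ) (dom : Set ℂ) (κ : ℕ) : Prop :=
  ∀ (n : ℕ) (z : Fin n → ℂ), (∀ i, z i ∈ dom) →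
    ∀ c : Fin (κ + 1) → (Fin n → ℂ), LinearIndependent ℂ c →
      ∃ a : Fin (κ + 1) → ℂ, a ≠ 0 ∧ 0 ≤ hermFormRe K z (∑ j, a j • c j)

/-- The kernel `K` has exactly `κ` negative squares on `dom`. -/
def NegSquaresEq (K : ℂ → ℂ → ℂ) (dom : Set ℂ) (κ : ℕ) : Prop :=
  NegSquaresLE K dom κ ∧ ∀ κ' : ℕ, κ' < κ → ¬ NegSquaresLE K dom κ'

/-- The class `N_κ` of generalized Nevanlinna functions: symmetric functions, meromorphic
off the reals, whose Nevanlinna kernel has exactly `κ` negative squares. -/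
structure IsGenNevanlinna (Q : ℂ → ℂ) (κ : ℕ) : Prop where
  mero : MeromorphicOn Q {z : ℂ | z.im ≠ 0}
  symm : ∀ z : ℂ, z.im ≠ 0 → AnalyticAt ℂ Q z →
    Q ((starRingEnd ℂ) z) = (starRingEnd ℂ) (Q z)
  negsq : NegSquaresEq (nevKernel Q) {z : ℂ | 0 < z.im ∧ AnalyticAt ℂ Q z} κ

/-- Evaluation of a real rational function at a complex point (junk at poles). -/
def ratEvalC (r : RatFunc ℝ) (z : ℂ) : ℂ :=
  Polynomial.eval₂ (algebraMap ℝ ℂ) z r.num / Polynomial.eval₂ (algebraMap ℝ ℂ) z r.denom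

/-- Evaluation of a real rational function at a real point (junk at poles). -/
def ratEvalR (r : RatFunc ℝ) (x : ℝ) : ℝ :=
  Polynomial.eval x r.num / Polynomial.eval x r.denom

/-- `r` is finite (has no pole) at the real point `x`. -/
def RatFiniteAt (r : RatFunc ℝ) (x : ℝ) : Prop := Polynomial.eval x r.denom ≠ 0

/-- The degree of a rational function, `max (deg num) (deg denom)`. -/
def ratDeg (r : RatFunc ℝ) : ℕ := max r.num.natDegree r.denom.natDegree

/-- `r` has a pole at `∞`. -/
def RatPoleAtInfty (r : RatFunc ℝ) : Prop := r.denom.natDegree < r.num.natDegree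

/-- The limit value of `r` at `∞` along `ℝ` (junk value `0` if `r` has a pole at `∞`). -/
def ratValInfty (r : RatFunc ℝ) : ℝ :=
  if r.num.natDegree = r.denom.natDegree then r.num.leadingCoeff / r.denom.leadingCoeff
  else 0

/-- `0 ≤ r ≤ ∞` holds on `S` (together with `∞` if `inftyIn` holds, interpreting `r(∞)` as
the limit of `r` along `ℝ`) except at finitely many exceptional points, each of which is an
isolated point of `S` satisfying the predicate `mass`. -/
def RatNonnegOnSpecExceptPoles (r : RatFunc ℝ) (S : Set ℝ) (mass : ℝ → Prop)
    (inftyIn : Prop) : Prop :=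
  {x : ℝ | x ∈ S ∧ RatFiniteAt r x ∧ ratEvalR r x < 0}.Finite ∧
  (∀ x ∈ S, RatFiniteAt r x → ratEvalR r x < 0 →
      (∃ ε > 0, S ∩ Set.Ioo (x - ε) (x + ε) = {x}) ∧ mass x) ∧
  (inftyIn → ¬ RatPoleAtInfty r → ratValInfty r < 0 → Bornology.IsBounded S)

/-- Linear factor `z - c`, with `c ∈ ℝ ∪ {∞}` (where `none` codes `∞`) and the
convention `z - ∞ = 1`. -/
def linC : Option ℝ → ℂ → ℂ
  | none, _ => 1
  | some a, z => z - (a : ℂ)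

/-- Real version of `linC`. -/
def linR : Option ℝ → ℝ → ℝ
  | none, _ => 1
  | some a, x => x - a

/-- The degree-one symmetric rational function `γ (z-a)/(z-b)`, `a, b ∈ ℝ ∪ {∞}`. -/
def sFun (γ : ℝ) (ao bo : Option ℝ) (z : ℂ) : ℂ := (γ : ℂ) * linC ao z / linC bo z

/-- Real values of `sFun`. -/
def sFunR (γ : ℝ) (ao bo : Option ℝ) (x : ℝ) : ℝ := γ * linR ao x / linR bo x

/-- `sFun γ ao bo` is finite at the real point `x`. -/
def sFiniteAt (bo : Option ℝ) (x : ℝ) : Prop := ∀ p : ℝ, bo = some p → x ≠ p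

/-- `sFun γ ao bo` has a pole at `∞`. -/
def sPoleAtInfty (ao bo : Option ℝ) : Prop := bo = none ∧ ao ≠ none

/-- Limit value of `sFun γ ao bo` at `∞`. -/
def sValInfty (γ : ℝ) (ao : Option ℝ) : ℝ := if ao = none then 0 else γ

/-- `0 ≤ s ≤ ∞` on `S` (together with `∞` if `inftyIn` holds) except at finitely many
exceptional points, for the degree-one rational function `s = sFun γ ao bo`. -/
def SNonnegOnSpecExceptPoles (γ : ℝ) (ao bo : Option ℝ) (S : Set ℝ) (mass : ℝ → Prop)
    (inftyIn : Prop) : Prop :=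
  {x : ℝ | x ∈ S ∧ sFiniteAt bo x ∧ sFunR γ ao bo x < 0}.Finite ∧
  (∀ x ∈ S, sFiniteAt bo x → sFunR γ ao bo x < 0 →
      (∃ ε > 0, S ∩ Set.Ioo (x - ε) (x + ε) = {x}) ∧ mass x) ∧
  (inftyIn → ¬ sPoleAtInfty ao bo → sValInfty γ ao < 0 → Bornology.IsBounded S)


section Statement12Helpers

open Finset

private lemma div_neg_iff_mul_neg' (a b : ℝ) : a / b < 0 ↔ a * b < 0 := by
  rw [div_neg_iff, mul_neg_iff]

private lemma div_pos_iff_mul_pos' (a b : ℝ) : 0 < a / b ↔ 0 < a * b := by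
  rw [div_pos_iff, mul_pos_iff]

private lemma neg_iff_mul_pos_right' {x p : ℝ} (hp : 0 < p) : x * p < 0 ↔ x < 0 :=
  ⟨fun h => by by_contra hx; push_neg at hx; nlinarith,
   fun h => mul_neg_of_neg_of_pos h hp⟩

private lemma pos_iff_mul_pos_right' {x p : ℝ} (hp : 0 < p) : 0 < x * p ↔ 0 < x :=
  ⟨fun h => by by_contra hx; push_neg at hx; nlinarith, fun h => mul_pos h hp⟩

private lemma prod_sign' {ι : Type*} [DecidableEq ι] (s : Finset ι) (f : ι → ℝ)
    (hf : ∀ k ∈ s, f k ≠ 0) :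
    ∏ k ∈ s, f k = (-1 : ℝ) ^ ((s.filter fun k => f k < 0).card) * ∏ k ∈ s, |f k| := by
  have h1 : ∏ k ∈ s, f k = ∏ k ∈ s, ((if f k < 0 then (-1:ℝ) else 1) * |f k|) := by
    refine Finset.prod_congr rfl fun k hk => ?_
    rcases (hf k hk).lt_or_gt with h | h
    · rw [if_pos h, abs_of_neg h]; ring
    · rw [if_neg (not_lt.2 h.le), abs_of_pos h]; ring
  rw [h1, Finset.prod_mul_distrib, Finset.prod_ite, Finset.prod_const, Finset.prod_const,
    one_pow, mul_one]

private lemma core_alt' {ι : Type*} [DecidableEq ι] (s : Finset ι) (c θ : ι → ℝ)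
    (hinj : Set.InjOn c s) (hmono : ∀ k ∈ s, ∀ l ∈ s, c k < c l → θ k < θ l)
    (h0 : ∀ k ∈ s, 0 < θ k) :
    0 ≤ (∑ k ∈ s, (-1 : ℝ) ^ ((s.filter fun l => c k < c l).card) * θ k) ∧
    ∀ B : ℝ, 0 ≤ B → (∀ k ∈ s, θ k ≤ B) →
      (∑ k ∈ s, (-1 : ℝ) ^ ((s.filter fun l => c k < c l).card) * θ k) ≤ B := by
  induction s using Finset.strongInduction with
  | _ s ih =>
    rcases s.eq_empty_or_nonempty with rfl | hne
    · simp
    · obtain ⟨k₀, hk₀s, hk₀max⟩ := s.exists_max_image c hne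
      set s' := s.erase k₀ with hs'
      have hss : s = insert k₀ s' := (Finset.insert_erase hk₀s).symm
      have hlt : ∀ k ∈ s', c k < c k₀ := by
        intro k hk
        have hks : k ∈ s := Finset.mem_of_mem_erase hk
        exact lt_of_le_of_ne (hk₀max k hks)
          (fun h => (Finset.ne_of_mem_erase hk) (hinj hks hk₀s h))
      have hfk₀ : (s.filter fun l => c k₀ < c l) = ∅ := by
        apply Finset.filter_eq_empty_iff.2
        intro l hl
        exact not_lt.2 (hk₀max l hl)
      have hfk : ∀ k ∈ s', ((s.filter fun l => c k < c l).card)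
          = ((s'.filter fun l => c k < c l).card) + 1 := by
        intro k hk
        have : (s.filter fun l => c k < c l) = insert k₀ (s'.filter fun l => c k < c l) := by
          rw [hss, Finset.filter_insert, if_pos (hlt k hk)]
        rw [this, Finset.card_insert_of_notMem (fun h => (Finset.notMem_erase k₀ s)
          (Finset.mem_of_mem_filter _ h))]
      have hsplit : (∑ k ∈ s, (-1 : ℝ) ^ ((s.filter fun l => c k < c l).card) * θ k)
          = θ k₀ - (∑ k ∈ s', (-1 : ℝ) ^ ((s'.filter fun l => c k < c l).card) * θ k) := by
        rw [← Finset.add_sum_erase _ _ hk₀s, hfk₀]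
        simp only [Finset.card_empty, pow_zero, one_mul, ← hs']
        have hterm : ∀ k ∈ s', (-1 : ℝ) ^ ((s.filter fun l => c k < c l).card) * θ k
            = -((-1 : ℝ) ^ ((s'.filter fun l => c k < c l).card) * θ k) := by
          intro k hk
          rw [hfk k hk, pow_succ]
          ring
        rw [Finset.sum_congr rfl hterm, Finset.sum_neg_distrib]
        ring
      have hsub : s' ⊂ s := Finset.erase_ssubset hk₀s
      have hinj' : Set.InjOn c s' := hinj.mono (by exact_mod_cast hsub.subset)
      have hmono' : ∀ k ∈ s', ∀ l ∈ s', c k < c l → θ k < θ l := fun k hk l hl =>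
        hmono k (Finset.mem_of_mem_erase hk) l (Finset.mem_of_mem_erase hl)
      have h0' : ∀ k ∈ s', 0 < θ k := fun k hk => h0 k (Finset.mem_of_mem_erase hk)
      obtain ⟨IH1, IH2⟩ := ih s' hsub hinj' hmono' h0'
      have hbound : (∑ k ∈ s', (-1 : ℝ) ^ ((s'.filter fun l => c k < c l).card) * θ k) ≤ θ k₀ :=
        IH2 (θ k₀) (h0 k₀ hk₀s).le
          (fun k hk => (hmono k (Finset.mem_of_mem_erase hk) k₀ hk₀s (hlt k hk)).le)
      constructor
      · rw [hsplit]; linarith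
      · intro B hB hBb
        rw [hsplit]
        have := hBb k₀ hk₀s
        linarith

private lemma ratio_mono' {u v y r₁ r₂ : ℝ} (h : u < v) (hy : y ≠ 0)
    (h1 : r₁ ^ 2 = u ^ 2 + y ^ 2) (h2 : r₂ ^ 2 = v ^ 2 + y ^ 2)
    (p1 : 0 < r₁) (p2 : 0 < r₂) : u / r₁ < v / r₂ := by
  rw [div_lt_div_iff₀ p1 p2]
  rcases lt_or_ge u 0 with hu | hu
  · rcases le_or_gt 0 v with hv | hv
    · calc u * r₂ < 0 := mul_neg_of_neg_of_pos hu p2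
        _ ≤ v * r₁ := mul_nonneg hv p1.le
    · have hy2 : (0:ℝ) < y ^ 2 := by positivity
      have hd : 0 < (u ^ 2 - v ^ 2) * y ^ 2 := by
        have : 0 < u ^ 2 - v ^ 2 := by nlinarith
        exact mul_pos this hy2
      have h5 : 0 ≤ -(v * r₁) := by nlinarith
      have hsq : (-(v * r₁)) ^ 2 < (-(u * r₂)) ^ 2 := by
        nlinarith [hd, h1, h2, sq_nonneg v, sq_nonneg u]
      have := lt_of_pow_lt_pow_left₀ 2 (by nlinarith : (0:ℝ) ≤ -(u * r₂)) hsq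
      linarith
  · have hv : 0 < v := lt_of_le_of_lt hu h
    have hy2 : (0:ℝ) < y ^ 2 := by positivity
    have hd : 0 < (v ^ 2 - u ^ 2) * y ^ 2 := by
      have : 0 < v ^ 2 - u ^ 2 := by nlinarith
      exact mul_pos this hy2
    have hsq : (u * r₂) ^ 2 < (v * r₁) ^ 2 := by
      nlinarith [hd, h1, h2, sq_nonneg v, sq_nonneg u]
    have := lt_of_pow_lt_pow_left₀ 2 (by positivity) hsq
    linarith

private lemma arg_pos_of_im_pos' {w : ℂ} (hw : 0 < w.im) : 0 < w.arg := by
  rcases lt_or_eq_of_le (Complex.arg_nonneg_iff.2 hw.le) with h | h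
  · exact h
  · exfalso
    have hw0 : w ≠ 0 := fun h0 => by simp [h0] at hw
    have hs := Complex.sin_arg w
    rw [← h, Real.sin_zero] at hs
    have : 0 < w.im / ‖w‖ := div_pos hw (norm_pos_iff.mpr hw0)
    linarith

private lemma arg_lt_pi_of_im_pos' {w : ℂ} (hw : 0 < w.im) : w.arg < Real.pi :=
  Complex.arg_lt_pi_iff.2 (Or.inr (ne_of_gt hw))

private lemma arg_strictMono' {z : ℂ} (hz : 0 < z.im) {c₁ c₂ : ℝ} (h : c₁ < c₂) :
    (z - (c₁ : ℂ)).arg < (z - (c₂ : ℂ)).arg := by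
  set w₁ := z - (c₁ : ℂ)
  set w₂ := z - (c₂ : ℂ)
  have him1 : w₁.im = z.im := by simp [w₁]
  have him2 : w₂.im = z.im := by simp [w₂]
  have hw1 : w₁ ≠ 0 := fun h0 => by rw [h0] at him1; simp at him1; linarith
  have hw2 : w₂ ≠ 0 := fun h0 => by rw [h0] at him2; simp at him2; linarith
  have hm : w₂.re < w₁.re := by simp [w₁, w₂]; linarith
  have hcos : Real.cos w₂.arg < Real.cos w₁.arg := by
    rw [Complex.cos_arg hw1, Complex.cos_arg hw2]
    have e1 : ‖w₁‖ ^ 2 = w₁.re ^ 2 + z.im ^ 2 := by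
      rw [Complex.sq_norm, Complex.normSq_apply, him1]; ring
    have e2 : ‖w₂‖ ^ 2 = w₂.re ^ 2 + z.im ^ 2 := by
      rw [Complex.sq_norm, Complex.normSq_apply, him2]; ring
    exact ratio_mono' hm (ne_of_gt hz) e2 e1 (norm_pos_iff.mpr hw2) (norm_pos_iff.mpr hw1)
  by_contra hle
  push_neg at hle
  have h1 : w₁.arg ∈ Set.Icc 0 Real.pi :=
    ⟨(arg_pos_of_im_pos' (him1 ▸ hz)).le, (arg_lt_pi_of_im_pos' (him1 ▸ hz)).le⟩
  have h2 : w₂.arg ∈ Set.Icc 0 Real.pi :=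
    ⟨(arg_pos_of_im_pos' (him2 ▸ hz)).le, (arg_lt_pi_of_im_pos' (him2 ▸ hz)).le⟩
  rcases eq_or_lt_of_le hle with heq | hlt
  · rw [heq] at hcos; linarith
  · have := Real.strictAntiOn_cos h2 h1 hlt
    linarith

private lemma prod_zpow_polar' {ι : Type*} [Fintype ι] (P : ι → ℝ) (E : ι → ℤ) (z : ℂ)
    (hz : ∀ k, z - (P k : ℂ) ≠ 0) :
    (∏ k, (z - (P k : ℂ)) ^ (E k))
      = ((∏ k, ‖z - (P k : ℂ)‖ ^ (E k) : ℝ) : ℂ)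
        * Complex.exp (((∑ k, (E k : ℝ) * (z - (P k : ℂ)).arg : ℝ) : ℂ) * Complex.I) := by
  have hfac : ∀ k : ι, (z - (P k : ℂ)) ^ (E k)
      = ((‖z - (P k : ℂ)‖ : ℂ)) ^ (E k)
        * Complex.exp ((((E k : ℝ) * (z - (P k : ℂ)).arg : ℝ) : ℂ) * Complex.I) := by
    intro k
    conv_lhs => rw [← Complex.norm_mul_exp_arg_mul_I (z - (P k : ℂ))]
    rw [mul_zpow, ← Complex.exp_int_mul]
    congr 1
    push_cast
    ring
  rw [Finset.prod_congr rfl (fun k _ => hfac k), Finset.prod_mul_distrib, ← Complex.exp_sum]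
  congr 1
  · push_cast
    rfl
  · congr 1
    push_cast [Finset.sum_mul]
    ring

private lemma im_mul_exp' (γ R S : ℝ) :
    ((γ : ℂ) * (((R : ℝ) : ℂ) * Complex.exp (((S : ℝ) : ℂ) * Complex.I))).im
      = γ * R * Real.sin S := by
  have h1 : (γ : ℂ) * ((R : ℂ) * Complex.exp (((S : ℝ) : ℂ) * Complex.I))
      = ((γ * R * Real.cos S : ℝ) : ℂ) + ((γ * R * Real.sin S : ℝ) : ℂ) * Complex.I := by
    rw [Complex.exp_mul_I, ← Complex.ofReal_cos, ← Complex.ofReal_sin]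
    push_cast; ring
  rw [h1]
  simp [Complex.sin_ofReal_re]

private lemma herglotz_key' {ι : Type*} [Fintype ι] [DecidableEq ι] (P : ι → ℝ)
    (hP : Function.Injective P) (γ : ℝ) (hγ : γ ≠ 0) (E : ι → ℤ)
    (hE : ∀ k, (E k : ℝ) = (if 0 < γ then 1 else -1)
      * (-1) ^ ((Finset.univ.filter fun l => P k < P l).card))
    (z : ℂ) (hz : 0 < z.im) :
    0 ≤ ((γ : ℂ) * ∏ k, (z - (P k : ℂ)) ^ (E k)).im := by
  have him : ∀ k, (z - (P k : ℂ)).im = z.im := fun k => by simp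
  have hzk : ∀ k, z - (P k : ℂ) ≠ 0 := fun k h0 => by
    have := him k; rw [h0] at this; simp at this; linarith
  set θ : ι → ℝ := fun k => (z - (P k : ℂ)).arg with hθ
  have hpos : ∀ k ∈ Finset.univ (α := ι), 0 < θ k := fun k _ =>
    arg_pos_of_im_pos' ((him k) ▸ hz)
  have hlt : ∀ k ∈ Finset.univ (α := ι), θ k ≤ Real.pi := fun k _ =>
    (arg_lt_pi_of_im_pos' ((him k) ▸ hz)).le
  have hmono : ∀ k ∈ Finset.univ (α := ι), ∀ l ∈ Finset.univ (α := ι), P k < P l → θ k < θ l :=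
    fun k _ l _ h => arg_strictMono' hz h
  obtain ⟨hT0, hTB⟩ := core_alt' Finset.univ P θ (hP.injOn) hmono hpos
  set T : ℝ := ∑ k, (-1 : ℝ) ^ ((Finset.univ.filter fun l => P k < P l).card) * θ k with hTdef
  have hTpi : T ≤ Real.pi := hTB Real.pi Real.pi_pos.le hlt
  set S : ℝ := ∑ k, (E k : ℝ) * θ k with hSdef
  have hSeq : S = (if 0 < γ then 1 else -1) * T := by
    rw [hSdef, hTdef, Finset.mul_sum]
    exact Finset.sum_congr rfl fun k _ => by rw [hE k]; ring
  have hsinT : 0 ≤ Real.sin T := Real.sin_nonneg_of_nonneg_of_le_pi hT0 hTpi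
  have hR : 0 < ∏ k, ‖z - (P k : ℂ)‖ ^ (E k) :=
    Finset.prod_pos fun k _ => zpow_pos (norm_pos_iff.mpr (hzk k)) _
  rw [prod_zpow_polar' P E z hzk, im_mul_exp']
  rcases lt_or_gt_of_ne hγ with hneg | hpos'
  · have hss : Real.sin S = -Real.sin T := by
      rw [hSeq, if_neg (not_lt.2 hneg.le)]; simp
    rw [hss]
    have hre : γ * (∏ k, ‖z - (P k : ℂ)‖ ^ (E k)) * -Real.sin T
        = (-γ) * ((∏ k, ‖z - (P k : ℂ)‖ ^ (E k)) * Real.sin T) := by ring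
    rw [hre]
    exact mul_nonneg (by linarith) (mul_nonneg hR.le hsinT)
  · have hss : Real.sin S = Real.sin T := by rw [hSeq, if_pos hpos']; simp
    rw [hss]
    exact mul_nonneg (mul_nonneg hpos'.le hR.le) hsinT

private lemma card_filter_sum' {m₁ m₂ : ℕ} (q : Fin m₁ ⊕ Fin m₂ → Prop) [DecidablePred q] :
    (Finset.univ.filter q).card
      = (Finset.univ.filter fun i => q (Sum.inl i)).card
        + (Finset.univ.filter fun j => q (Sum.inr j)).card := by
  rw [Finset.card_filter, Finset.card_filter, Finset.card_filter, Fintype.sum_sum_type]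

end Statement12Helpers
/-- canonical factorization of a simple symmetric rational function
`s(z) = γ ∏ (z - aᵢ) / ∏ (z - bⱼ)` with pairwise distinct real zeros and poles.  With
`η_c(s)` the number of zeros and poles of `s` greater than `c`, and
`πᵢ = (1 - (-1)^{η_{aᵢ}} sgn γ)/2`, `κⱼ = (1 + (-1)^{η_{bⱼ}} sgn γ)/2`, one has:
`πᵢ = 1` iff `lim_{z→aᵢ} s(z)/(z-aᵢ) < 0`, `κⱼ = 1` iff `lim_{z→bⱼ} (z-bⱼ)s(z) > 0`,
`s₀ := γ ∏ (z-aᵢ)^{1-2πᵢ} / ∏ (z-bⱼ)^{1-2κⱼ}` is a Nevanlinna function,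
`ψ := ∏ (z-aᵢ)^{2πᵢ} / ∏ (z-bⱼ)^{2κⱼ}` is nonnegative on `ℝ`, and `s = ψ s₀`. -/
theorem statement12 (γ : ℝ) (hγ : γ ≠ 0) (m₁ m₂ : ℕ)
    (a : Fin m₁ → ℝ) (b : Fin m₂ → ℝ)
    (hdistinct : Function.Injective (Sum.elim a b : Fin m₁ ⊕ Fin m₂ → ℝ)) :
    let η : ℝ → ℕ := fun c =>
      (Finset.univ.filter fun i => c < a i).card +
        (Finset.univ.filter fun j => c < b j).card
    let sgnγ : ℤ := if 0 < γ then 1 else -1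
    let π : Fin m₁ → ℤ := fun i => (1 - (-1) ^ η (a i) * sgnγ) / 2
    let κ : Fin m₂ → ℤ := fun j => (1 + (-1) ^ η (b j) * sgnγ) / 2
    (∀ i : Fin m₁, (π i = 1 ↔
        ∃ L : ℝ, L < 0 ∧
          Tendsto (fun x : ℝ => γ * (∏ i', (x - a i')) / ((x - a i) * ∏ j, (x - b j)))
            (nhdsWithin (a i) {a i}ᶜ) (nhds L))) ∧
    (∀ j : Fin m₂, (κ j = 1 ↔
        ∃ L : ℝ, 0 < L ∧
          Tendsto (fun x : ℝ => (x - b j) * (γ * (∏ i, (x - a i)) / ∏ j', (x - b j')))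
            (nhdsWithin (b j) {b j}ᶜ) (nhds L))) ∧
    IsNevanlinna (fun z : ℂ =>
      (γ : ℂ) * (∏ i, (z - (a i : ℂ)) ^ (1 - 2 * π i)) /
        ∏ j, (z - (b j : ℂ)) ^ (1 - 2 * κ j)) ∧
    (∀ x : ℝ, 0 ≤ (∏ i, (x - a i) ^ (2 * π i)) / ∏ j, (x - b j) ^ (2 * κ j)) ∧
    (∀ z : ℂ, z.im ≠ 0 →
      (γ : ℂ) * (∏ i, (z - (a i : ℂ))) / (∏ j, (z - (b j : ℂ))) =
        ((∏ i, (z - (a i : ℂ)) ^ (2 * π i)) / ∏ j, (z - (b j : ℂ)) ^ (2 * κ j)) *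
          ((γ : ℂ) * (∏ i, (z - (a i : ℂ)) ^ (1 - 2 * π i)) /
            ∏ j, (z - (b j : ℂ)) ^ (1 - 2 * κ j))) := by
  intro η sgnγ π κ
  classical
  have ha : Function.Injective a := fun i i' h => by
    have := hdistinct (a₁ := Sum.inl i) (a₂ := Sum.inl i') (by simpa using h)
    simpa using this
  have hb : Function.Injective b := fun j j' h => by
    have := hdistinct (a₁ := Sum.inr j) (a₂ := Sum.inr j') (by simpa using h)
    simpa using this
  have hab : ∀ i j, a i ≠ b j := fun i j h => by
    have := hdistinct (a₁ := Sum.inl i) (a₂ := Sum.inr j) (by simpa using h)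
    simp at this
  have hsg : sgnγ = if 0 < γ then 1 else -1 := rfl
  have hηd : ∀ c : ℝ, η c = (Finset.univ.filter fun i => c < a i).card
      + (Finset.univ.filter fun j => c < b j).card := fun _ => rfl
  have hπd : ∀ i, π i = (1 - (-1) ^ η (a i) * sgnγ) / 2 := fun _ => rfl
  have hκd : ∀ j, κ j = (1 + (-1) ^ η (b j) * sgnγ) / 2 := fun _ => rfl
  have hsg1 : sgnγ = 1 ∨ sgnγ = -1 := by rw [hsg]; split <;> simp
  have htv : ∀ n : ℕ, ((-1:ℤ) ^ n * sgnγ = 1 ∨ (-1:ℤ) ^ n * sgnγ = -1) := by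
    intro n
    rcases Nat.even_or_odd n with he | ho
    · rw [he.neg_one_pow, one_mul]; exact hsg1
    · rw [ho.neg_one_pow, neg_one_mul]; rcases hsg1 with h | h <;> omega
  have hπ01 : ∀ i, (π i = 0 ∧ (-1:ℤ) ^ (η (a i)) * sgnγ = 1)
      ∨ (π i = 1 ∧ (-1:ℤ) ^ (η (a i)) * sgnγ = -1) := by
    intro i
    rcases htv (η (a i)) with h | h
    · left; exact ⟨by rw [hπd i, h]; decide, h⟩
    · right; exact ⟨by rw [hπd i, h]; decide, h⟩
  have hκ01 : ∀ j, (κ j = 0 ∧ (-1:ℤ) ^ (η (b j)) * sgnγ = -1)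
      ∨ (κ j = 1 ∧ (-1:ℤ) ^ (η (b j)) * sgnγ = 1) := by
    intro j
    rcases htv (η (b j)) with h | h
    · right; exact ⟨by rw [hκd j, h]; decide, h⟩
    · left; exact ⟨by rw [hκd j, h]; decide, h⟩
  have hE1 : ∀ i, 1 - 2 * π i = (-1:ℤ) ^ (η (a i)) * sgnγ := by
    intro i; rcases hπ01 i with ⟨h0, h1⟩ | ⟨h0, h1⟩ <;> rw [h0, h1] <;> decide
  have hE2 : ∀ j, -(1 - 2 * κ j) = (-1:ℤ) ^ (η (b j)) * sgnγ := by
    intro j; rcases hκ01 j with ⟨h0, h1⟩ | ⟨h0, h1⟩ <;> rw [h0, h1] <;> decide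
  have keyneg : ∀ n : ℕ, (γ * (-1:ℝ) ^ n < 0 ↔ (-1:ℤ) ^ n * sgnγ = -1) := by
    intro n
    rcases Nat.even_or_odd n with he | ho
    · rw [he.neg_one_pow, he.neg_one_pow, mul_one, one_mul]
      constructor
      · intro h; rw [hsg, if_neg (not_lt.2 (by linarith : γ ≤ 0))]
      · intro h
        by_cases h0 : 0 < γ
        · rw [hsg, if_pos h0] at h; exact absurd h (by decide)
        · exact lt_of_le_of_ne (not_lt.1 h0) hγ
    · rw [ho.neg_one_pow, ho.neg_one_pow, mul_neg_one, neg_one_mul]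
      constructor
      · intro h; rw [hsg, if_pos (by linarith : 0 < γ)]
      · intro h
        by_cases h0 : 0 < γ
        · linarith
        · rw [hsg, if_neg h0] at h; exact absurd h (by decide)
  have keypos : ∀ n : ℕ, (0 < γ * (-1:ℝ) ^ n ↔ (-1:ℤ) ^ n * sgnγ = 1) := by
    intro n
    have hx0 : γ * (-1:ℝ) ^ n ≠ 0 := mul_ne_zero hγ (pow_ne_zero _ (by norm_num))
    constructor
    · intro h
      rcases htv n with hv | hv
      · exact hv
      · exact absurd ((keyneg n).2 hv) (by linarith)
    · intro hv
      rcases lt_or_gt_of_ne hx0 with h | h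
      · have := (keyneg n).1 h; omega
      · exact h
  have part1 : ∀ i : Fin m₁, (π i = 1 ↔
      ∃ L : ℝ, L < 0 ∧
        Tendsto (fun x : ℝ => γ * (∏ i', (x - a i')) / ((x - a i) * ∏ j, (x - b j)))
          (nhdsWithin (a i) {a i}ᶜ) (nhds L)) := by
    intro i
    set L₀ : ℝ := γ * (∏ i' ∈ Finset.univ.erase i, (a i - a i')) / (∏ j, (a i - b j)) with hL₀
    have hAne : ∀ i' ∈ Finset.univ.erase i, a i - a i' ≠ 0 := fun i' hi' =>
      sub_ne_zero.2 fun h => (Finset.ne_of_mem_erase hi') (ha h.symm)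
    have hBne : ∀ j ∈ (Finset.univ : Finset (Fin m₂)), a i - b j ≠ 0 := fun j _ =>
      sub_ne_zero.2 (hab i j)
    have hDne : (∏ j, (a i - b j)) ≠ 0 := Finset.prod_ne_zero_iff.2 hBne
    have hnum : Continuous fun x : ℝ => γ * ∏ i' ∈ Finset.univ.erase i, (x - a i') :=
      continuous_const.mul (continuous_finset_prod _ fun i' _ => continuous_id.sub continuous_const)
    have hden : Continuous fun x : ℝ => ∏ j, (x - b j) :=
      continuous_finset_prod _ fun j _ => continuous_id.sub continuous_const
    have hgt : Tendsto (fun x : ℝ => γ * (∏ i' ∈ Finset.univ.erase i, (x - a i')) / ∏ j, (x - b j))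
        (nhds (a i)) (nhds L₀) :=
      (hnum.continuousAt (x := a i)).div (hden.continuousAt) hDne
    have hA : Tendsto (fun x : ℝ => γ * (∏ i', (x - a i')) / ((x - a i) * ∏ j, (x - b j)))
        (nhdsWithin (a i) {a i}ᶜ) (nhds L₀) := by
      apply Tendsto.congr' _ (hgt.mono_left nhdsWithin_le_nhds)
      filter_upwards [self_mem_nhdsWithin] with x hx
      rw [Set.mem_compl_singleton_iff] at hx
      have hxne : x - a i ≠ 0 := sub_ne_zero.2 hx
      rw [← Finset.mul_prod_erase Finset.univ (fun i' => x - a i') (Finset.mem_univ i)]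
      rw [show γ * ((x - a i) * ∏ i' ∈ Finset.univ.erase i, (x - a i'))
          = (x - a i) * (γ * ∏ i' ∈ Finset.univ.erase i, (x - a i')) from by ring]
      rw [mul_div_mul_left _ _ hxne]
    have hiff : L₀ < 0 ↔ π i = 1 := by
      rw [hL₀, div_neg_iff_mul_neg', prod_sign' _ _ hAne, prod_sign' _ _ hBne]
      have hn1 : ((Finset.univ.erase i).filter fun i' => a i - a i' < 0).card
          = (Finset.univ.filter fun i' => a i < a i').card := by
        congr 1
        ext i'
        simp only [Finset.mem_filter, Finset.mem_erase, Finset.mem_univ, true_and,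
          and_true, sub_neg]
        constructor
        · rintro ⟨-, h⟩; exact h
        · intro h; exact ⟨fun he => absurd h (by rw [he]; exact lt_irrefl _), h⟩
      have hn2 : ((Finset.univ : Finset (Fin m₂)).filter fun j => a i - b j < 0).card
          = (Finset.univ.filter fun j => a i < b j).card := by
        congr 1; ext j; simp [sub_neg]
      have hPA : 0 < ∏ i' ∈ Finset.univ.erase i, |a i - a i'| :=
        Finset.prod_pos fun i' h => abs_pos.2 (hAne i' h)
      have hPB : 0 < ∏ j, |a i - b j| := Finset.prod_pos fun j h => abs_pos.2 (hBne j h)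
      have hηi : (Finset.univ.filter fun i' => a i < a i').card
          + (Finset.univ.filter fun j => a i < b j).card = η (a i) := (hηd (a i)).symm
      rw [hn1, hn2]
      rw [show γ * ((-1:ℝ) ^ (Finset.univ.filter fun i' => a i < a i').card
            * ∏ i' ∈ Finset.univ.erase i, |a i - a i'|)
          * ((-1:ℝ) ^ (Finset.univ.filter fun j => a i < b j).card * ∏ j, |a i - b j|)
          = (γ * (-1:ℝ) ^ (η (a i)))
            * ((∏ i' ∈ Finset.univ.erase i, |a i - a i'|) * ∏ j, |a i - b j|) from by
        rw [← hηi, pow_add]; ring]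
      rw [neg_iff_mul_pos_right' (mul_pos hPA hPB), keyneg]
      constructor
      · intro h
        rcases hπ01 i with ⟨h0, h1⟩ | ⟨h0, h1⟩
        · exact absurd (h1.symm.trans h) (by decide)
        · exact h0
      · intro h
        rcases hπ01 i with ⟨h0, h1⟩ | ⟨h0, h1⟩
        · exact absurd (h0.symm.trans h) (by decide)
        · exact h1
    constructor
    · intro h; exact ⟨L₀, hiff.2 h, hA⟩
    · rintro ⟨L, hL, hT⟩
      have hLL : L = L₀ := tendsto_nhds_unique hT hA
      exact hiff.1 (hLL ▸ hL)
  have part2 : ∀ j : Fin m₂, (κ j = 1 ↔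
      ∃ L : ℝ, 0 < L ∧
        Tendsto (fun x : ℝ => (x - b j) * (γ * (∏ i, (x - a i)) / ∏ j', (x - b j')))
          (nhdsWithin (b j) {b j}ᶜ) (nhds L)) := by
    intro j
    set L₀ : ℝ := γ * (∏ i, (b j - a i)) / (∏ j' ∈ Finset.univ.erase j, (b j - b j')) with hL₀
    have hAne : ∀ i ∈ (Finset.univ : Finset (Fin m₁)), b j - a i ≠ 0 := fun i _ =>
      sub_ne_zero.2 fun h => (hab i j) h.symm
    have hBne : ∀ j' ∈ Finset.univ.erase j, b j - b j' ≠ 0 := fun j' hj' =>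
      sub_ne_zero.2 fun h => (Finset.ne_of_mem_erase hj') (hb h.symm)
    have hDne : (∏ j' ∈ Finset.univ.erase j, (b j - b j')) ≠ 0 := Finset.prod_ne_zero_iff.2 hBne
    have hnum : Continuous fun x : ℝ => γ * ∏ i, (x - a i) :=
      continuous_const.mul (continuous_finset_prod _ fun i _ => continuous_id.sub continuous_const)
    have hden : Continuous fun x : ℝ => ∏ j' ∈ Finset.univ.erase j, (x - b j') :=
      continuous_finset_prod _ fun j' _ => continuous_id.sub continuous_const
    have hgt : Tendsto (fun x : ℝ => γ * (∏ i, (x - a i)) / ∏ j' ∈ Finset.univ.erase j, (x - b j'))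
        (nhds (b j)) (nhds L₀) :=
      (hnum.continuousAt (x := b j)).div (hden.continuousAt) hDne
    have hA : Tendsto (fun x : ℝ => (x - b j) * (γ * (∏ i, (x - a i)) / ∏ j', (x - b j')))
        (nhdsWithin (b j) {b j}ᶜ) (nhds L₀) := by
      apply Tendsto.congr' _ (hgt.mono_left nhdsWithin_le_nhds)
      filter_upwards [self_mem_nhdsWithin] with x hx
      rw [Set.mem_compl_singleton_iff] at hx
      have hxne : x - b j ≠ 0 := sub_ne_zero.2 hx
      rw [← Finset.mul_prod_erase Finset.univ (fun j' => x - b j') (Finset.mem_univ j)]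
      rw [← mul_div_assoc, mul_div_mul_left _ _ hxne]
    have hiff : 0 < L₀ ↔ κ j = 1 := by
      rw [hL₀, div_pos_iff_mul_pos', prod_sign' _ _ hAne, prod_sign' _ _ hBne]
      have hn1 : ((Finset.univ : Finset (Fin m₁)).filter fun i => b j - a i < 0).card
          = (Finset.univ.filter fun i => b j < a i).card := by
        congr 1; ext i; simp [sub_neg]
      have hn2 : ((Finset.univ.erase j).filter fun j' => b j - b j' < 0).card
          = (Finset.univ.filter fun j' => b j < b j').card := by
        congr 1
        ext j'
        simp only [Finset.mem_filter, Finset.mem_erase, Finset.mem_univ, true_and,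
          and_true, sub_neg]
        constructor
        · rintro ⟨-, h⟩; exact h
        · intro h; exact ⟨fun he => absurd h (by rw [he]; exact lt_irrefl _), h⟩
      have hPA : 0 < ∏ i, |b j - a i| := Finset.prod_pos fun i h => abs_pos.2 (hAne i h)
      have hPB : 0 < ∏ j' ∈ Finset.univ.erase j, |b j - b j'| :=
        Finset.prod_pos fun j' h => abs_pos.2 (hBne j' h)
      have hηj : (Finset.univ.filter fun i => b j < a i).card
          + (Finset.univ.filter fun j' => b j < b j').card = η (b j) := (hηd (b j)).symm
      rw [hn1, hn2]
      rw [show γ * ((-1:ℝ) ^ (Finset.univ.filter fun i => b j < a i).card * ∏ i, |b j - a i|)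
          * ((-1:ℝ) ^ (Finset.univ.filter fun j' => b j < b j').card
            * ∏ j' ∈ Finset.univ.erase j, |b j - b j'|)
          = (γ * (-1:ℝ) ^ (η (b j)))
            * ((∏ i, |b j - a i|) * ∏ j' ∈ Finset.univ.erase j, |b j - b j'|) from by
        rw [← hηj, pow_add]; ring]
      rw [pos_iff_mul_pos_right' (mul_pos hPA hPB), keypos]
      constructor
      · intro h
        rcases hκ01 j with ⟨h0, h1⟩ | ⟨h0, h1⟩
        · exact absurd (h1.symm.trans h) (by decide)
        · exact h0
      · intro h
        rcases hκ01 j with ⟨h0, h1⟩ | ⟨h0, h1⟩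
        · exact absurd (h0.symm.trans h) (by decide)
        · exact h1
    constructor
    · intro h; exact ⟨L₀, hiff.2 h, hA⟩
    · rintro ⟨L, hL, hT⟩
      have hLL : L = L₀ := tendsto_nhds_unique hT hA
      exact hiff.1 (hLL ▸ hL)
  -- setup for parts 3-5
  set P : Fin m₁ ⊕ Fin m₂ → ℝ := Sum.elim a b with hPdef
  set E : Fin m₁ ⊕ Fin m₂ → ℤ := Sum.elim (fun i => 1 - 2 * π i) (fun j => -(1 - 2 * κ j))
    with hEdef
  have hQconv : ∀ z : ℂ, (∀ j, z - (b j : ℂ) ≠ 0) →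
      (γ:ℂ) * (∏ i, (z - (a i:ℂ)) ^ (1 - 2 * π i)) / (∏ j, (z - (b j:ℂ)) ^ (1 - 2 * κ j))
        = (γ:ℂ) * ∏ k, (z - (P k : ℂ)) ^ (E k) := by
    intro z hzb
    rw [Fintype.prod_sum_type]
    simp only [hPdef, hEdef, Sum.elim_inl, Sum.elim_inr]
    have hinv : (∏ j, (z - (b j:ℂ)) ^ (-(1 - 2 * κ j)))
        = (∏ j, (z - (b j:ℂ)) ^ (1 - 2 * κ j))⁻¹ := by
      rw [← Finset.prod_inv_distrib]
      exact Finset.prod_congr rfl fun j _ => zpow_neg _ _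
    rw [hinv, mul_div_assoc, div_eq_mul_inv]
  have hEcast : ∀ k, ((E k : ℤ) : ℝ) = (if 0 < γ then (1:ℝ) else -1)
      * (-1) ^ ((Finset.univ.filter fun l => P k < P l).card) := by
    intro k
    have hcards : ((Finset.univ.filter fun l => P k < P l).card) = η (P k) := by
      rw [card_filter_sum' (fun l => P k < P l)]
      simp only [hPdef, Sum.elim_inl, Sum.elim_inr]
      rfl
    rw [hcards]
    rcases k with i | j
    · have h1 : E (Sum.inl i) = (-1:ℤ) ^ (η (P (Sum.inl i))) * sgnγ := by
        simp only [hEdef, hPdef, Sum.elim_inl]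
        exact hE1 i
      rw [h1]
      by_cases h0 : 0 < γ
      · rw [hsg, if_pos h0, if_pos h0]; push_cast; ring
      · rw [hsg, if_neg h0, if_neg h0]; push_cast; ring
    · have h1 : E (Sum.inr j) = (-1:ℤ) ^ (η (P (Sum.inr j))) * sgnγ := by
        simp only [hEdef, hPdef, Sum.elim_inr]
        exact hE2 j
      rw [h1]
      by_cases h0 : 0 < γ
      · rw [hsg, if_pos h0, if_pos h0]; push_cast; ring
      · rw [hsg, if_neg h0, if_neg h0]; push_cast; ring
  have hsymmQ : ∀ z : ℂ,
      (γ:ℂ) * (∏ i, ((starRingEnd ℂ) z - (a i:ℂ)) ^ (1 - 2 * π i))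
          / ∏ j, ((starRingEnd ℂ) z - (b j:ℂ)) ^ (1 - 2 * κ j)
        = (starRingEnd ℂ) ((γ:ℂ) * (∏ i, (z - (a i:ℂ)) ^ (1 - 2 * π i))
          / ∏ j, (z - (b j:ℂ)) ^ (1 - 2 * κ j)) := by
    intro z
    simp only [map_div₀, map_mul, map_prod, map_zpow₀, map_sub, Complex.conj_ofReal]
  have hposQ : ∀ z : ℂ, 0 < z.im →
      0 ≤ ((γ:ℂ) * (∏ i, (z - (a i:ℂ)) ^ (1 - 2 * π i))
        / ∏ j, (z - (b j:ℂ)) ^ (1 - 2 * κ j)).im := by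
    intro z hz0
    have hzb : ∀ j, z - (b j:ℂ) ≠ 0 := fun j h => by
      have h2 : (z - (b j:ℂ)).im = z.im := by simp
      rw [h] at h2; simp at h2; linarith
    rw [hQconv z hzb]
    exact herglotz_key' P hdistinct γ hγ E hEcast z hz0
  have part3 : IsNevanlinna (fun z : ℂ =>
      (γ : ℂ) * (∏ i, (z - (a i : ℂ)) ^ (1 - 2 * π i)) /
        ∏ j, (z - (b j : ℂ)) ^ (1 - 2 * κ j)) := by
    constructor
    · intro z hz
      have hz' : z.im ≠ 0 := hz
      have hsub : ∀ c : ℝ, z - (c:ℂ) ≠ 0 := fun c h =>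
        hz' (by rw [sub_eq_zero] at h; rw [h]; exact Complex.ofReal_im c)
      apply DifferentiableAt.differentiableWithinAt
      apply DifferentiableAt.div
      · exact (DifferentiableAt.fun_finsetProd fun i _ =>
          ((differentiableAt_id (x := z)).sub (differentiableAt_const (a i : ℂ))).zpow
            (Or.inl (hsub (a i)))).const_mul _
      · exact DifferentiableAt.fun_finsetProd fun j _ =>
          ((differentiableAt_id (x := z)).sub (differentiableAt_const (b j : ℂ))).zpow (Or.inl (hsub (b j)))
      · exact Finset.prod_ne_zero_iff.2 fun j _ => zpow_ne_zero _ (hsub (b j))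
    · intro z _
      exact hsymmQ z
    · intro z hz
      rcases lt_or_gt_of_ne hz with hneg | hpos0
      · set w := (starRingEnd ℂ) z with hwdef
        have hwim : 0 < w.im := by rw [hwdef, Complex.conj_im]; linarith
        have h2 := hsymmQ w
        rw [show (starRingEnd ℂ) w = z from by rw [hwdef]; exact Complex.conj_conj z] at h2
        have him : ((γ:ℂ) * (∏ i, (z - (a i:ℂ)) ^ (1 - 2 * π i))
            / ∏ j, (z - (b j:ℂ)) ^ (1 - 2 * κ j)).im
            = -(((γ:ℂ) * (∏ i, (w - (a i:ℂ)) ^ (1 - 2 * π i))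
            / ∏ j, (w - (b j:ℂ)) ^ (1 - 2 * κ j)).im) := by
          rw [h2, Complex.conj_im]
        rw [him, show z.im = -w.im from by rw [hwdef, Complex.conj_im]; ring, neg_mul_neg]
        exact mul_nonneg (hposQ w hwim) hwim.le
      · exact mul_nonneg (hposQ z hpos0) hpos0.le
  have part4 : ∀ x : ℝ, 0 ≤ (∏ i, (x - a i) ^ (2 * π i)) / ∏ j, (x - b j) ^ (2 * κ j) := by
    intro x
    apply div_nonneg
    · apply Finset.prod_nonneg
      intro i _
      rcases hπ01 i with ⟨h0, -⟩ | ⟨h0, -⟩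
      · rw [h0]; norm_num
      · rw [h0, show (2 * (1:ℤ)) = ((2:ℕ):ℤ) from by norm_num, zpow_natCast]
        exact sq_nonneg _
    · apply Finset.prod_nonneg
      intro j _
      rcases hκ01 j with ⟨h0, -⟩ | ⟨h0, -⟩
      · rw [h0]; norm_num
      · rw [h0, show (2 * (1:ℤ)) = ((2:ℕ):ℤ) from by norm_num, zpow_natCast]
        exact sq_nonneg _
  have part5 : ∀ z : ℂ, z.im ≠ 0 →
      (γ : ℂ) * (∏ i, (z - (a i : ℂ))) / (∏ j, (z - (b j : ℂ))) =
        ((∏ i, (z - (a i : ℂ)) ^ (2 * π i)) / ∏ j, (z - (b j : ℂ)) ^ (2 * κ j)) *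
          ((γ : ℂ) * (∏ i, (z - (a i : ℂ)) ^ (1 - 2 * π i)) /
            ∏ j, (z - (b j : ℂ)) ^ (1 - 2 * κ j)) := by
    intro z hz
    have hsub : ∀ c : ℝ, z - (c:ℂ) ≠ 0 := fun c h =>
      hz (by rw [sub_eq_zero] at h; rw [h]; exact Complex.ofReal_im c)
    have hcomb1 : (∏ i, (z - (a i:ℂ)) ^ (2 * π i)) * (∏ i, (z - (a i:ℂ)) ^ (1 - 2 * π i))
        = ∏ i, (z - (a i:ℂ)) := by
      rw [← Finset.prod_mul_distrib]
      refine Finset.prod_congr rfl fun i _ => ?_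
      rw [← zpow_add₀ (hsub (a i)), show 2 * π i + (1 - 2 * π i) = 1 from by ring, zpow_one]
    have hcomb2 : (∏ j, (z - (b j:ℂ)) ^ (2 * κ j)) * (∏ j, (z - (b j:ℂ)) ^ (1 - 2 * κ j))
        = ∏ j, (z - (b j:ℂ)) := by
      rw [← Finset.prod_mul_distrib]
      refine Finset.prod_congr rfl fun j _ => ?_
      rw [← zpow_add₀ (hsub (b j)), show 2 * κ j + (1 - 2 * κ j) = 1 from by ring, zpow_one]
    rw [div_mul_div_comm]
    rw [show (∏ i, (z - (a i:ℂ)) ^ (2 * π i)) * ((γ:ℂ) * ∏ i, (z - (a i:ℂ)) ^ (1 - 2 * π i))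
        = (γ:ℂ) * ((∏ i, (z - (a i:ℂ)) ^ (2 * π i)) * (∏ i, (z - (a i:ℂ)) ^ (1 - 2 * π i)))
        from by ring]
    rw [hcomb1, hcomb2]
  exact ⟨part1, part2, part3, part4, part5⟩
end
end

section
/- Let s be a simple symmetric rational function of degree n ≥ 1 whose zeros and poles are all real, of order one, and interlacing (between any two consecutive zeros there is exactly one pole and vice versa when ordered on ℝ). Then s admits a factorization s = ∏_{i=1}^n s_i where each s_i is a rational function of degree one with real coefficients, such that the closed sets D_i⁻ := closure of {x ∈ ℝ : s_i(x) ≤ 0} are pairwise disjoint: D_i⁻ ∩ D_j⁻ = ∅ for i ≠ j. -/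
open MeasureTheory Filter Set Topology

noncomputable section

section Statement14Aux

lemma sFiniteAt_some {b x : ℝ} : sFiniteAt (some b) x ↔ x ≠ b := by
  constructor
  · exact fun h => h b rfl
  · intro h p hp; injection hp with hp; subst hp; exact h

lemma sFiniteAt_none {x : ℝ} : sFiniteAt none x := fun p hp => by cases hp

lemma sFunR_ss {γ a b x : ℝ} : sFunR γ (some a) (some b) x = γ * (x - a) / (x - b) := rfl
lemma sFunR_sn {γ a x : ℝ} : sFunR γ (some a) none x = γ * (x - a) := by
  simp [sFunR, linR]
lemma sFunR_ns {γ b x : ℝ} : sFunR γ none (some b) x = γ / (x - b) := by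
  simp [sFunR, linR]

/-- γ>0, a<b : closure D = [a,b] -/
lemma Dclos_pp {γ a b : ℝ} (hγ : 0 < γ) (hlt : a < b) :
    closure {x : ℝ | sFiniteAt (some b) x ∧ sFunR γ (some a) (some b) x ≤ 0} = Icc a b := by
  have hset : {x : ℝ | sFiniteAt (some b) x ∧ sFunR γ (some a) (some b) x ≤ 0} = Ico a b := by
    ext x
    simp only [mem_setOf_eq, sFiniteAt_some, sFunR_ss, mem_Ico]
    constructor
    · rintro ⟨hxb, hle⟩
      rcases lt_trichotomy x b with h | h | h
      · constructor
        · by_contra h2; push_neg at h2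
          have : 0 < γ * (x - a) / (x - b) := div_pos_of_neg_of_neg (by nlinarith) (by linarith)
          linarith
        · exact h
      · exact absurd h hxb
      · exfalso
        have : 0 < γ * (x - a) / (x - b) := div_pos (by nlinarith) (by linarith)
        linarith
    · rintro ⟨hax, hxb⟩
      refine ⟨ne_of_lt hxb, ?_⟩
      exact div_nonpos_iff.2 (Or.inl ⟨by nlinarith, by linarith⟩)
  rw [hset, closure_Ico (ne_of_lt hlt)]

/-- γ>0, b<a : closure D = [b,a] -/
lemma Dclos_pp' {γ a b : ℝ} (hγ : 0 < γ) (hlt : b < a) :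
    closure {x : ℝ | sFiniteAt (some b) x ∧ sFunR γ (some a) (some b) x ≤ 0} = Icc b a := by
  have hset : {x : ℝ | sFiniteAt (some b) x ∧ sFunR γ (some a) (some b) x ≤ 0} = Ioc b a := by
    ext x
    simp only [mem_setOf_eq, sFiniteAt_some, sFunR_ss, mem_Ioc]
    constructor
    · rintro ⟨hxb, hle⟩
      rcases lt_trichotomy x b with h | h | h
      · exfalso
        have : 0 < γ * (x - a) / (x - b) := div_pos_of_neg_of_neg (by nlinarith) (by linarith)
        linarith
      · exact absurd h hxb
      · refine ⟨h, ?_⟩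
        by_contra h2; push_neg at h2
        have : 0 < γ * (x - a) / (x - b) := div_pos (by nlinarith) (by linarith)
        linarith
    · rintro ⟨hbx, hxa⟩
      refine ⟨ne_of_gt hbx, ?_⟩
      exact div_nonpos_iff.2 (Or.inr ⟨by nlinarith, by linarith⟩)
  rw [hset, closure_Ioc (ne_of_lt hlt)]

/-- γ<0, zero and pole at p<q (either order of a,b as {p,q}) : closure D = Iic p ∪ Ici q.
    We state two versions. -/
lemma Dclos_pn {γ a b : ℝ} (hγ : γ < 0) (hlt : a < b) :
    closure {x : ℝ | sFiniteAt (some b) x ∧ sFunR γ (some a) (some b) x ≤ 0} = Iic a ∪ Ici b := by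
  apply subset_antisymm
  · apply (IsClosed.union isClosed_Iic isClosed_Ici).closure_subset_iff.2
    rintro x ⟨hxb, hle⟩
    rw [sFiniteAt_some] at hxb
    rw [sFunR_ss] at hle
    by_contra h
    simp only [mem_union, mem_Iic, mem_Ici, not_or, not_le] at h
    obtain ⟨h1, h2⟩ := h
    have : γ * (x - a) / (x - b) > 0 := div_pos_of_neg_of_neg (by nlinarith) (by linarith)
    linarith
  · have : Iic a ∪ Ici b = closure (Iio a ∪ Ioi b) := by
      rw [closure_union, closure_Iio, closure_Ioi]
    rw [this]
    apply closure_mono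
    rintro x (hx | hx)
    · simp only [mem_Iio] at hx
      refine ⟨sFiniteAt_some.2 (ne_of_lt (hx.trans hlt)), ?_⟩
      rw [sFunR_ss]
      exact div_nonpos_iff.2 (Or.inl ⟨by nlinarith, by linarith⟩)
    · simp only [mem_Ioi] at hx
      refine ⟨sFiniteAt_some.2 (ne_of_gt hx), ?_⟩
      rw [sFunR_ss]
      exact div_nonpos_iff.2 (Or.inr ⟨by nlinarith, by linarith⟩)

lemma Dclos_pn' {γ a b : ℝ} (hγ : γ < 0) (hlt : b < a) :
    closure {x : ℝ | sFiniteAt (some b) x ∧ sFunR γ (some a) (some b) x ≤ 0} = Iic b ∪ Ici a := by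
  apply subset_antisymm
  · apply (IsClosed.union isClosed_Iic isClosed_Ici).closure_subset_iff.2
    rintro x ⟨hxb, hle⟩
    rw [sFiniteAt_some] at hxb
    rw [sFunR_ss] at hle
    by_contra h
    simp only [mem_union, mem_Iic, mem_Ici, not_or, not_le] at h
    obtain ⟨h1, h2⟩ := h
    have : γ * (x - a) / (x - b) > 0 := div_pos (by nlinarith) (by linarith)
    linarith
  · have : Iic b ∪ Ici a = closure (Iio b ∪ Ioi a) := by
      rw [closure_union, closure_Iio, closure_Ioi]
    rw [this]
    apply closure_mono
    rintro x (hx | hx)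
    · simp only [mem_Iio] at hx
      refine ⟨sFiniteAt_some.2 (ne_of_lt hx), ?_⟩
      rw [sFunR_ss]
      exact div_nonpos_iff.2 (Or.inl ⟨by nlinarith, by linarith⟩)
    · simp only [mem_Ioi] at hx
      refine ⟨sFiniteAt_some.2 (ne_of_gt (hlt.trans hx)), ?_⟩
      rw [sFunR_ss]
      exact div_nonpos_iff.2 (Or.inr ⟨by nlinarith, by linarith⟩)

lemma Dclos_zp {γ a : ℝ} (hγ : 0 < γ) :
    closure {x : ℝ | sFiniteAt (none : Option ℝ) x ∧ sFunR γ (some a) none x ≤ 0} = Iic a := by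
  have hset : {x : ℝ | sFiniteAt (none : Option ℝ) x ∧ sFunR γ (some a) none x ≤ 0} = Iic a := by
    ext x
    simp only [mem_setOf_eq, sFunR_sn, mem_Iic]
    constructor
    · rintro ⟨-, hle⟩; nlinarith
    · intro h; exact ⟨sFiniteAt_none, by nlinarith⟩
  rw [hset]; exact isClosed_Iic.closure_eq

lemma Dclos_zn {γ a : ℝ} (hγ : γ < 0) :
    closure {x : ℝ | sFiniteAt (none : Option ℝ) x ∧ sFunR γ (some a) none x ≤ 0} = Ici a := by
  have hset : {x : ℝ | sFiniteAt (none : Option ℝ) x ∧ sFunR γ (some a) none x ≤ 0} = Ici a := by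
    ext x
    simp only [mem_setOf_eq, sFunR_sn, mem_Ici]
    constructor
    · rintro ⟨-, hle⟩; nlinarith
    · intro h; exact ⟨sFiniteAt_none, by nlinarith⟩
  rw [hset]; exact isClosed_Ici.closure_eq

lemma Dclos_qp {γ b : ℝ} (hγ : 0 < γ) :
    closure {x : ℝ | sFiniteAt (some b) x ∧ sFunR γ none (some b) x ≤ 0} = Iic b := by
  have hset : {x : ℝ | sFiniteAt (some b) x ∧ sFunR γ none (some b) x ≤ 0} = Iio b := by
    ext x
    simp only [mem_setOf_eq, sFiniteAt_some, sFunR_ns, mem_Iio]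
    constructor
    · rintro ⟨hxb, hle⟩
      rcases lt_trichotomy x b with h | h | h
      · exact h
      · exact absurd h hxb
      · exfalso; have : 0 < γ / (x - b) := div_pos hγ (by linarith); linarith
    · intro h
      exact ⟨ne_of_lt h, le_of_lt (div_neg_of_pos_of_neg hγ (by linarith))⟩
  rw [hset, closure_Iio]

lemma Dclos_qn {γ b : ℝ} (hγ : γ < 0) :
    closure {x : ℝ | sFiniteAt (some b) x ∧ sFunR γ none (some b) x ≤ 0} = Ici b := by
  have hset : {x : ℝ | sFiniteAt (some b) x ∧ sFunR γ none (some b) x ≤ 0} = Ioi b := by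
    ext x
    simp only [mem_setOf_eq, sFiniteAt_some, sFunR_ns, mem_Ioi]
    constructor
    · rintro ⟨hxb, hle⟩
      rcases lt_trichotomy x b with h | h | h
      · exfalso; have : 0 < γ / (x - b) := div_pos_of_neg_of_neg hγ (by linarith); linarith
      · exact absurd h hxb
      · exact h
    · intro h
      exact ⟨ne_of_gt h, le_of_lt (div_neg_of_neg_of_pos hγ (by linarith))⟩
  rw [hset, closure_Ioi]

-- interval disjointness helpers
lemma disj_Icc_Icc {p q r s : ℝ} (h : q < r) : Icc p q ∩ Icc r s = ∅ := by
  rw [eq_empty_iff_forall_notMem]; rintro x ⟨⟨-, h1⟩, h2, -⟩; linarith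
lemma disj_Iic_Icc {p q r : ℝ} (h : p < q) : Iic p ∩ Icc q r = ∅ := by
  rw [eq_empty_iff_forall_notMem]; rintro x ⟨h1, h2, -⟩
  simp only [mem_Iic] at h1; linarith
lemma disj_Icc_Ici {p q r : ℝ} (h : q < r) : Icc p q ∩ Ici r = ∅ := by
  rw [eq_empty_iff_forall_notMem]; rintro x ⟨⟨-, h1⟩, h2⟩
  simp only [mem_Ici] at h2; linarith
lemma disj_Iic_Ici {p q : ℝ} (h : p < q) : Iic p ∩ Ici q = ∅ := by
  rw [eq_empty_iff_forall_notMem]; rintro x ⟨h1, h2⟩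
  simp only [mem_Iic] at h1; simp only [mem_Ici] at h2; linarith
lemma disj_union_Icc {p q r s : ℝ} (h1 : p < q) (h2 : r < s) :
    (Iic p ∪ Ici s) ∩ Icc q r = ∅ := by
  rw [eq_empty_iff_forall_notMem]; rintro x ⟨hu, hq, hr⟩
  rcases hu with h | h
  · simp only [mem_Iic] at h; linarith
  · simp only [mem_Ici] at h; linarith

lemma inter_symm_empty {α : Type*} {s t : Set α} (h : t ∩ s = ∅) : s ∩ t = ∅ := by
  rw [Set.inter_comm]; exact h

lemma interlace_aux (p q : ℕ) (A : Fin p → ℝ) (B : Fin q → ℝ)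
    (hA : StrictMono A) (hB : StrictMono B)
    (h1 : ∀ i i', A i < A i' → ∃ j, A i < B j ∧ B j < A i')
    (h2 : ∀ j j', B j < B j' → ∃ i, B j < A i ∧ A i < B j')
    (hab : ∀ i j, A i ≠ B j)
    (h0 : ∀ (hp : 0 < p) (hq : 0 < q), A ⟨0, hp⟩ < B ⟨0, hq⟩) :
    (∀ (j : ℕ) (hq' : j < q) (hp' : j < p), A ⟨j, hp'⟩ < B ⟨j, hq'⟩) ∧
    (∀ (j : ℕ) (hq' : j < q) (hp' : j + 1 < p), B ⟨j, hq'⟩ < A ⟨j + 1, hp'⟩) ∧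
    p ≤ q + 1 ∧ (0 < p → q ≤ p) := by
  have L1 : ∀ (j : ℕ) (hq' : j < q) (hp' : j < p), A ⟨j, hp'⟩ < B ⟨j, hq'⟩ := by
    intro j
    induction j using Nat.strong_induction_on with
    | _ j ih =>
      intro hq' hp'
      match j with
      | 0 => exact h0 hp' hq'
      | (m + 1) =>
        by_contra hcon
        push_neg at hcon
        have hBA : B ⟨m + 1, hq'⟩ < A ⟨m + 1, hp'⟩ :=
          lt_of_le_of_ne hcon (fun h => hab _ _ h.symm)
        have hm : A ⟨m, by omega⟩ < B ⟨m, by omega⟩ := ih m (by omega) (by omega) (by omega)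
        have hBB : B ⟨m, by omega⟩ < B ⟨m + 1, hq'⟩ := hB (by simp [Fin.lt_def])
        obtain ⟨i, hi1, hi2⟩ := h2 _ _ hBB
        have hgt : (⟨m, by omega⟩ : Fin p) < i := hA.lt_iff_lt.mp (hm.trans hi1)
        have hge : (⟨m + 1, hp'⟩ : Fin p) ≤ i := by
          rw [Fin.le_def]; rw [Fin.lt_def] at hgt; simpa using hgt
        have := hA.monotone hge
        linarith
  have L2 : ∀ (j : ℕ) (hq' : j < q) (hp' : j + 1 < p), B ⟨j, hq'⟩ < A ⟨j + 1, hp'⟩ := by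
    intro j
    induction j using Nat.strong_induction_on with
    | _ j ih =>
      intro hq' hp'
      by_contra hcon
      push_neg at hcon
      have hAB : A ⟨j + 1, hp'⟩ < B ⟨j, hq'⟩ := lt_of_le_of_ne hcon (hab _ _)
      have hAA : A ⟨j, by omega⟩ < A ⟨j + 1, hp'⟩ := hA (by simp [Fin.lt_def])
      obtain ⟨k, hk1, hk2⟩ := h1 _ _ hAA
      have hkj : k < (⟨j, hq'⟩ : Fin q) := hB.lt_iff_lt.mp (hk2.trans hAB)
      have hkj' : (k : ℕ) < j := hkj
      have hk' : B ⟨(k : ℕ), k.2⟩ < A ⟨(k : ℕ) + 1, by omega⟩ := ih k hkj' k.2 (by omega)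
      have : A ⟨(k : ℕ) + 1, by omega⟩ ≤ A ⟨j, by omega⟩ := hA.monotone (by
        rw [Fin.le_def]; simpa using hkj')
      have hBk : B k = B ⟨(k : ℕ), k.2⟩ := by congr
      rw [hBk] at hk1
      linarith
  refine ⟨L1, L2, ?_, ?_⟩
  · by_contra hcon
    push_neg at hcon
    have hq2 : q + 2 ≤ p := hcon
    have hAA : A ⟨q, by omega⟩ < A ⟨q + 1, by omega⟩ := hA (by simp [Fin.lt_def])
    obtain ⟨k, hk1, hk2⟩ := h1 _ _ hAA
    have hk' : B ⟨(k : ℕ), k.2⟩ < A ⟨(k : ℕ) + 1, by omega⟩ := L2 k k.2 (by omega)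
    have : A ⟨(k : ℕ) + 1, by omega⟩ ≤ A ⟨q, by omega⟩ := hA.monotone (by
      rw [Fin.le_def]; simp)
    have hBk : B k = B ⟨(k : ℕ), k.2⟩ := by congr
    rw [hBk] at hk1
    linarith
  · intro hp
    by_contra hcon
    push_neg at hcon
    have hplt : p < q := hcon
    have hm : A ⟨p - 1, by omega⟩ < B ⟨p - 1, by omega⟩ := L1 (p - 1) (by omega) (by omega)
    have hBB : B ⟨p - 1, by omega⟩ < B ⟨p, by omega⟩ := hB (by simp [Fin.lt_def]; omega)
    obtain ⟨i, hi1, hi2⟩ := h2 _ _ hBB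
    have hgt : (⟨p - 1, by omega⟩ : Fin p) < i := hA.lt_iff_lt.mp (hm.trans hi1)
    have hgt' : p - 1 < (i : ℕ) := hgt
    exact absurd i.2 (by omega)


lemma prod_sFun_eq {n : ℕ} (γs : Fin n → ℝ) (aos bos : Fin n → Option ℝ) (z : ℂ) :
    ∏ i, sFun (γs i) (aos i) (bos i) z
      = ((∏ i, (γs i : ℂ)) * ∏ i, linC (aos i) z) / ∏ i, linC (bos i) z := by
  rw [← Finset.prod_mul_distrib, ← Finset.prod_div_distrib]
  rfl

lemma prod_gammas (γ : ℝ) (m : ℕ) :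
    (∏ i, (((Fin.cases γ (fun _ => 1) : Fin (m + 1) → ℝ)) i : ℂ)) = (γ : ℂ) := by
  rw [Fin.prod_univ_succ]
  simp

/-- Case A: l₁ = l₂ = m+1, pattern a b a b ... a b. -/
lemma buildA (γ : ℝ) (hγ : γ ≠ 0) (m : ℕ) (A B : Fin (m + 1) → ℝ)
    (hA : StrictMono A) (hB : StrictMono B)
    (hab : ∀ i j, A i ≠ B j)
    (h1 : ∀ i, A i < B i)
    (h2 : ∀ i j : Fin (m + 1), i < j → B i < A j) :
    ∃ (γs : Fin (m + 1) → ℝ) (aos bos : Fin (m + 1) → Option ℝ),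
      (∀ i, γs i ≠ 0) ∧
      (∀ i, ¬(aos i = none ∧ bos i = none)) ∧
      (∀ i, aos i ≠ bos i) ∧
      (∀ z : ℂ, z.im ≠ 0 →
        (γ : ℂ) * (∏ i, (z - (A i : ℂ))) / (∏ j, (z - (B j : ℂ))) =
          ∏ i, sFun (γs i) (aos i) (bos i) z) ∧
      (∀ i j, i ≠ j →
        closure {x : ℝ | sFiniteAt (bos i) x ∧ sFunR (γs i) (aos i) (bos i) x ≤ 0} ∩
          closure {x : ℝ | sFiniteAt (bos j) x ∧ sFunR (γs j) (aos j) (bos j) x ≤ 0} = ∅) := by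
  set γs : Fin (m + 1) → ℝ := Fin.cases γ (fun _ => 1) with hγs
  have hγs0 : γs 0 = γ := rfl
  have hγss : ∀ j : Fin m, γs j.succ = 1 := fun j => rfl
  have hγsne : ∀ i, γs i ≠ 0 := by
    intro i
    refine Fin.cases ?_ ?_ i
    · rw [hγs0]; exact hγ
    · intro j; rw [hγss]; exact one_ne_zero
  rcases hγ.lt_or_gt with hneg | hpos
  · -- γ < 0 : outer pair (A 0, B last), inner pairs (B j.castSucc, A j.succ)
    refine ⟨γs, fun i => some (A i),
      Fin.cases (some (B (Fin.last m))) (fun j => some (B j.castSucc)), ?_, ?_, ?_, ?_, ?_⟩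
    · exact hγsne
    · intro i; refine Fin.cases ?_ ?_ i <;> simp
    · intro i
      refine Fin.cases ?_ ?_ i
      · simp only [Fin.cases_zero, ne_eq, Option.some.injEq]
        exact hab 0 (Fin.last m)
      · intro j
        simp only [Fin.cases_succ, ne_eq, Option.some.injEq]
        exact hab j.succ j.castSucc
    · intro z hz
      rw [prod_sFun_eq, prod_gammas]
      have e1 : (∏ i, linC (some (A i)) z) = ∏ i, (z - (A i : ℂ)) := by
        simp [linC]
      have e2 : (∏ i, linC ((Fin.cases (some (B (Fin.last m)))
          (fun j => some (B j.castSucc)) : Fin (m+1) → Option ℝ) i) z)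
          = ∏ i, (z - (B i : ℂ)) := by
        rw [Fin.prod_univ_succ]
        simp only [Fin.cases_zero, Fin.cases_succ]
        rw [Fin.prod_univ_castSucc (f := fun i => z - (B i : ℂ))]
        simp only [linC]
        ring
      rw [e1, e2]
    · have key : ∀ i : Fin (m + 1),
          closure {x : ℝ | sFiniteAt ((Fin.cases (some (B (Fin.last m)))
              (fun j => some (B j.castSucc)) : Fin (m+1) → Option ℝ) i) x ∧
            sFunR (γs i) (some (A i)) ((Fin.cases (some (B (Fin.last m)))
              (fun j => some (B j.castSucc)) : Fin (m+1) → Option ℝ) i) x ≤ 0}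
          = (Fin.cases (Iic (A 0) ∪ Ici (B (Fin.last m)))
              (fun j => Icc (B j.castSucc) (A j.succ)) : Fin (m+1) → Set ℝ) i := by
        intro i
        refine Fin.cases ?_ ?_ i
        · simp only [Fin.cases_zero, hγs0]
          exact Dclos_pn hneg (lt_of_le_of_lt (hA.monotone (Fin.zero_le _)) (h1 _))
        · intro j
          simp only [Fin.cases_succ, hγss]
          exact Dclos_pp' one_pos (h2 _ _ (Fin.castSucc_lt_succ (i := j)))
      intro i j hne
      rw [key i, key j]
      have main : ∀ k : Fin m,
          (Iic (A 0) ∪ Ici (B (Fin.last m))) ∩ Icc (B k.castSucc) (A k.succ) = ∅ := by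
        intro k
        apply disj_union_Icc
        · exact lt_of_lt_of_le (h1 0) (hB.monotone (Fin.zero_le _))
        · exact lt_of_le_of_lt (hA.monotone (Fin.le_last _)) (h1 _)
      have succ_succ : ∀ k k' : Fin m, k < k' →
          Icc (B k.castSucc) (A k.succ) ∩ Icc (B k'.castSucc) (A k'.succ) = ∅ := by
        intro k k' hkk
        apply disj_Icc_Icc
        have hle : k.succ ≤ k'.castSucc := by
          have hv : (k : ℕ) < (k' : ℕ) := hkk
          rw [Fin.le_def, Fin.val_succ, Fin.coe_castSucc]
          omega
        calc A k.succ ≤ A k'.castSucc := hA.monotone hle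
          _ < B k'.castSucc := h1 _
      rcases Fin.eq_zero_or_eq_succ i with rfl | ⟨k, rfl⟩ <;>
        rcases Fin.eq_zero_or_eq_succ j with rfl | ⟨k', rfl⟩
      · exact absurd rfl hne
      · simp only [Fin.cases_zero, Fin.cases_succ]; exact main k'
      · simp only [Fin.cases_zero, Fin.cases_succ]; exact inter_symm_empty (main k)
      · simp only [Fin.cases_succ]
        have hkk : k ≠ k' := fun h => hne (by rw [h])
        rcases hkk.lt_or_gt with h | h
        · exact succ_succ k k' h
        · exact inter_symm_empty (succ_succ k' k h)
  · -- γ > 0 : pairs (A i, B i)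
    refine ⟨γs, fun i => some (A i), fun i => some (B i), hγsne, ?_, ?_, ?_, ?_⟩
    · intro i; simp
    · intro i; simpa using hab i i
    · intro z hz
      rw [prod_sFun_eq, prod_gammas]
      simp [linC]
    · have key : ∀ i : Fin (m + 1),
          closure {x : ℝ | sFiniteAt (some (B i)) x ∧
            sFunR (γs i) (some (A i)) (some (B i)) x ≤ 0} = Icc (A i) (B i) := by
        intro i
        refine Fin.cases ?_ ?_ i
        · rw [hγs0]; exact Dclos_pp hpos (h1 0)
        · intro j; rw [hγss]; exact Dclos_pp one_pos (h1 j.succ)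
      intro i j hne
      rw [key i, key j]
      rcases hne.lt_or_gt with h | h
      · exact disj_Icc_Icc (h2 _ _ h)
      · exact inter_symm_empty (disj_Icc_Icc (h2 _ _ h))

/-- Case B: l₁ = l₂ = m+1, pattern b a b a ... b a. -/
lemma buildB (γ : ℝ) (hγ : γ ≠ 0) (m : ℕ) (A B : Fin (m + 1) → ℝ)
    (hA : StrictMono A) (hB : StrictMono B)
    (hab : ∀ i j, A i ≠ B j)
    (h1 : ∀ i, B i < A i)
    (h2 : ∀ i j : Fin (m + 1), i < j → A i < B j) :
    ∃ (γs : Fin (m + 1) → ℝ) (aos bos : Fin (m + 1) → Option ℝ),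
      (∀ i, γs i ≠ 0) ∧
      (∀ i, ¬(aos i = none ∧ bos i = none)) ∧
      (∀ i, aos i ≠ bos i) ∧
      (∀ z : ℂ, z.im ≠ 0 →
        (γ : ℂ) * (∏ i, (z - (A i : ℂ))) / (∏ j, (z - (B j : ℂ))) =
          ∏ i, sFun (γs i) (aos i) (bos i) z) ∧
      (∀ i j, i ≠ j →
        closure {x : ℝ | sFiniteAt (bos i) x ∧ sFunR (γs i) (aos i) (bos i) x ≤ 0} ∩
          closure {x : ℝ | sFiniteAt (bos j) x ∧ sFunR (γs j) (aos j) (bos j) x ≤ 0} = ∅) := by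
  set γs : Fin (m + 1) → ℝ := Fin.cases γ (fun _ => 1) with hγs
  have hγs0 : γs 0 = γ := rfl
  have hγss : ∀ j : Fin m, γs j.succ = 1 := fun j => rfl
  have hγsne : ∀ i, γs i ≠ 0 := by
    intro i
    refine Fin.cases ?_ ?_ i
    · rw [hγs0]; exact hγ
    · intro j; rw [hγss]; exact one_ne_zero
  rcases hγ.lt_or_gt with hneg | hpos
  · -- γ < 0 : outer pair (B 0, A last), inner pairs (A j.castSucc, B j.succ)
    refine ⟨γs, Fin.cases (some (A (Fin.last m))) (fun j => some (A j.castSucc)),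
      fun i => some (B i), ?_, ?_, ?_, ?_, ?_⟩
    · exact hγsne
    · intro i; refine Fin.cases ?_ ?_ i <;> simp
    · intro i
      refine Fin.cases ?_ ?_ i
      · simp only [Fin.cases_zero, ne_eq, Option.some.injEq]
        exact hab (Fin.last m) 0
      · intro j
        simp only [Fin.cases_succ, ne_eq, Option.some.injEq]
        exact hab j.castSucc j.succ
    · intro z hz
      rw [prod_sFun_eq, prod_gammas]
      have e1 : (∏ i, linC ((Fin.cases (some (A (Fin.last m)))
          (fun j => some (A j.castSucc)) : Fin (m+1) → Option ℝ) i) z)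
          = ∏ i, (z - (A i : ℂ)) := by
        rw [Fin.prod_univ_succ]
        simp only [Fin.cases_zero, Fin.cases_succ]
        rw [Fin.prod_univ_castSucc (f := fun i => z - (A i : ℂ))]
        simp only [linC]
        ring
      have e2 : (∏ i, linC (some (B i)) z) = ∏ i, (z - (B i : ℂ)) := by
        simp [linC]
      rw [e1, e2]
    · have key : ∀ i : Fin (m + 1),
          closure {x : ℝ | sFiniteAt (some (B i)) x ∧
            sFunR (γs i) ((Fin.cases (some (A (Fin.last m)))
              (fun j => some (A j.castSucc)) : Fin (m+1) → Option ℝ) i) (some (B i)) x ≤ 0}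
          = (Fin.cases (Iic (B 0) ∪ Ici (A (Fin.last m)))
              (fun j => Icc (A j.castSucc) (B j.succ)) : Fin (m+1) → Set ℝ) i := by
        intro i
        refine Fin.cases ?_ ?_ i
        · simp only [Fin.cases_zero, hγs0]
          exact Dclos_pn' hneg (lt_of_le_of_lt (hB.monotone (Fin.zero_le _)) (h1 _))
        · intro j
          simp only [Fin.cases_succ, hγss]
          exact Dclos_pp one_pos (h2 _ _ (Fin.castSucc_lt_succ (i := j)))
      intro i j hne
      rw [key i, key j]
      have main : ∀ k : Fin m,
          (Iic (B 0) ∪ Ici (A (Fin.last m))) ∩ Icc (A k.castSucc) (B k.succ) = ∅ := by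
        intro k
        apply disj_union_Icc
        · exact lt_of_lt_of_le (h1 0) (hA.monotone (Fin.zero_le _))
        · exact lt_of_le_of_lt (hB.monotone (Fin.le_last _)) (h1 _)
      have succ_succ : ∀ k k' : Fin m, k < k' →
          Icc (A k.castSucc) (B k.succ) ∩ Icc (A k'.castSucc) (B k'.succ) = ∅ := by
        intro k k' hkk
        apply disj_Icc_Icc
        have hle : k.succ ≤ k'.castSucc := by
          have hv : (k : ℕ) < (k' : ℕ) := hkk
          rw [Fin.le_def, Fin.val_succ, Fin.coe_castSucc]
          omega
        calc B k.succ ≤ B k'.castSucc := hB.monotone hle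
          _ < A k'.castSucc := h1 _
      rcases Fin.eq_zero_or_eq_succ i with rfl | ⟨k, rfl⟩ <;>
        rcases Fin.eq_zero_or_eq_succ j with rfl | ⟨k', rfl⟩
      · exact absurd rfl hne
      · simp only [Fin.cases_zero, Fin.cases_succ]; exact main k'
      · simp only [Fin.cases_zero, Fin.cases_succ]; exact inter_symm_empty (main k)
      · simp only [Fin.cases_succ]
        have hkk : k ≠ k' := fun h => hne (by rw [h])
        rcases hkk.lt_or_gt with h | h
        · exact succ_succ k k' h
        · exact inter_symm_empty (succ_succ k' k h)
  · -- γ > 0 : pairs (B i, A i)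
    refine ⟨γs, fun i => some (A i), fun i => some (B i), hγsne, ?_, ?_, ?_, ?_⟩
    · intro i; simp
    · intro i; simpa using hab i i
    · intro z hz
      rw [prod_sFun_eq, prod_gammas]
      simp [linC]
    · have key : ∀ i : Fin (m + 1),
          closure {x : ℝ | sFiniteAt (some (B i)) x ∧
            sFunR (γs i) (some (A i)) (some (B i)) x ≤ 0} = Icc (B i) (A i) := by
        intro i
        refine Fin.cases ?_ ?_ i
        · rw [hγs0]; exact Dclos_pp' hpos (h1 0)
        · intro j; rw [hγss]; exact Dclos_pp' one_pos (h1 j.succ)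
      intro i j hne
      rw [key i, key j]
      rcases hne.lt_or_gt with h | h
      · exact disj_Icc_Icc (h2 _ _ h)
      · exact inter_symm_empty (disj_Icc_Icc (h2 _ _ h))

/-- Case C: l₁ = m+1 zeros, l₂ = m poles, pattern a b a ... b a. -/
lemma buildC (γ : ℝ) (hγ : γ ≠ 0) (m : ℕ) (A : Fin (m + 1) → ℝ) (B : Fin m → ℝ)
    (hA : StrictMono A) (hB : StrictMono B)
    (h1 : ∀ j : Fin m, A j.castSucc < B j)
    (h2 : ∀ j : Fin m, B j < A j.succ) :
    ∃ (γs : Fin (m + 1) → ℝ) (aos bos : Fin (m + 1) → Option ℝ),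
      (∀ i, γs i ≠ 0) ∧
      (∀ i, ¬(aos i = none ∧ bos i = none)) ∧
      (∀ i, aos i ≠ bos i) ∧
      (∀ z : ℂ, z.im ≠ 0 →
        (γ : ℂ) * (∏ i, (z - (A i : ℂ))) / (∏ j, (z - (B j : ℂ))) =
          ∏ i, sFun (γs i) (aos i) (bos i) z) ∧
      (∀ i j, i ≠ j →
        closure {x : ℝ | sFiniteAt (bos i) x ∧ sFunR (γs i) (aos i) (bos i) x ≤ 0} ∩
          closure {x : ℝ | sFiniteAt (bos j) x ∧ sFunR (γs j) (aos j) (bos j) x ≤ 0} = ∅) := by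
  set γs : Fin (m + 1) → ℝ := Fin.cases γ (fun _ => 1) with hγs
  have hγs0 : γs 0 = γ := rfl
  have hγss : ∀ j : Fin m, γs j.succ = 1 := fun j => rfl
  have hγsne : ∀ i, γs i ≠ 0 := by
    intro i
    refine Fin.cases ?_ ?_ i
    · rw [hγs0]; exact hγ
    · intro j; rw [hγss]; exact one_ne_zero
  have ebos : (∀ z : ℂ, (∏ i, linC ((Fin.cases none (fun j => some (B j)) :
      Fin (m+1) → Option ℝ) i) z) = ∏ j, (z - (B j : ℂ))) := by
    intro z
    rw [Fin.prod_univ_succ]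
    simp [linC]
  rcases hγ.lt_or_gt with hneg | hpos
  · -- γ < 0 : single zero A last (rightmost), pairs (A j.castSucc, B j)
    refine ⟨γs, Fin.cases (some (A (Fin.last m))) (fun j => some (A j.castSucc)),
      Fin.cases none (fun j => some (B j)), hγsne, ?_, ?_, ?_, ?_⟩
    · intro i; refine Fin.cases ?_ ?_ i <;> simp
    · intro i
      refine Fin.cases ?_ ?_ i
      · simp
      · intro j
        simp only [Fin.cases_succ, ne_eq, Option.some.injEq]
        exact fun h => (h1 j).ne (by rw [h])
    · intro z hz
      rw [prod_sFun_eq, prod_gammas]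
      have e1 : (∏ i, linC ((Fin.cases (some (A (Fin.last m)))
          (fun j => some (A j.castSucc)) : Fin (m+1) → Option ℝ) i) z)
          = ∏ i, (z - (A i : ℂ)) := by
        rw [Fin.prod_univ_succ]
        simp only [Fin.cases_zero, Fin.cases_succ]
        rw [Fin.prod_univ_castSucc (f := fun i => z - (A i : ℂ))]
        simp only [linC]
        ring
      rw [e1, ebos]
    · have key : ∀ i : Fin (m + 1),
          closure {x : ℝ | sFiniteAt ((Fin.cases none (fun j => some (B j)) :
              Fin (m+1) → Option ℝ) i) x ∧
            sFunR (γs i) ((Fin.cases (some (A (Fin.last m)))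
              (fun j => some (A j.castSucc)) : Fin (m+1) → Option ℝ) i)
              ((Fin.cases none (fun j => some (B j)) : Fin (m+1) → Option ℝ) i) x ≤ 0}
          = (Fin.cases (Ici (A (Fin.last m)))
              (fun j => Icc (A j.castSucc) (B j)) : Fin (m+1) → Set ℝ) i := by
        intro i
        refine Fin.cases ?_ ?_ i
        · simp only [Fin.cases_zero, hγs0]
          exact Dclos_zn hneg
        · intro j
          simp only [Fin.cases_succ, hγss]
          exact Dclos_pp one_pos (h1 j)
      intro i j hne
      rw [key i, key j]
      have main : ∀ k : Fin m, Ici (A (Fin.last m)) ∩ Icc (A k.castSucc) (B k) = ∅ := by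
        intro k
        exact inter_symm_empty (disj_Icc_Ici (lt_of_lt_of_le (h2 k) (hA.monotone (Fin.le_last _))))
      have succ_succ : ∀ k k' : Fin m, k < k' →
          Icc (A k.castSucc) (B k) ∩ Icc (A k'.castSucc) (B k') = ∅ := by
        intro k k' hkk
        apply disj_Icc_Icc
        have hle : k.succ ≤ k'.castSucc := by
          have hv : (k : ℕ) < (k' : ℕ) := hkk
          rw [Fin.le_def, Fin.val_succ, Fin.coe_castSucc]
          omega
        calc B k < A k.succ := h2 k
          _ ≤ A k'.castSucc := hA.monotone hle
      rcases Fin.eq_zero_or_eq_succ i with rfl | ⟨k, rfl⟩ <;>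
        rcases Fin.eq_zero_or_eq_succ j with rfl | ⟨k', rfl⟩
      · exact absurd rfl hne
      · simp only [Fin.cases_zero, Fin.cases_succ]; exact main k'
      · simp only [Fin.cases_zero, Fin.cases_succ]; exact inter_symm_empty (main k)
      · simp only [Fin.cases_succ]
        have hkk : k ≠ k' := fun h => hne (by rw [h])
        rcases hkk.lt_or_gt with h | h
        · exact succ_succ k k' h
        · exact inter_symm_empty (succ_succ k' k h)
  · -- γ > 0 : single zero A 0 (leftmost), pairs (B j, A j.succ)
    refine ⟨γs, fun i => some (A i), Fin.cases none (fun j => some (B j)),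
      hγsne, ?_, ?_, ?_, ?_⟩
    · intro i; refine Fin.cases ?_ ?_ i <;> simp
    · intro i
      refine Fin.cases ?_ ?_ i
      · simp
      · intro j
        simp only [Fin.cases_succ, ne_eq, Option.some.injEq]
        exact fun h => (h2 j).ne (by rw [h])
    · intro z hz
      rw [prod_sFun_eq, prod_gammas]
      have e1 : (∏ i, linC (some (A i)) z) = ∏ i, (z - (A i : ℂ)) := by
        simp [linC]
      rw [e1, ebos]
    · have key : ∀ i : Fin (m + 1),
          closure {x : ℝ | sFiniteAt ((Fin.cases none (fun j => some (B j)) :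
              Fin (m+1) → Option ℝ) i) x ∧
            sFunR (γs i) (some (A i))
              ((Fin.cases none (fun j => some (B j)) : Fin (m+1) → Option ℝ) i) x ≤ 0}
          = (Fin.cases (Iic (A 0)) (fun j => Icc (B j) (A j.succ)) : Fin (m+1) → Set ℝ) i := by
        intro i
        refine Fin.cases ?_ ?_ i
        · simp only [Fin.cases_zero, hγs0]
          exact Dclos_zp hpos
        · intro j
          simp only [Fin.cases_succ, hγss]
          exact Dclos_pp' one_pos (h2 j)
      intro i j hne
      rw [key i, key j]
      have main : ∀ k : Fin m, Iic (A 0) ∩ Icc (B k) (A k.succ) = ∅ := by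
        intro k
        exact disj_Iic_Icc (lt_of_le_of_lt (hA.monotone (Fin.zero_le _)) (h1 k))
      have succ_succ : ∀ k k' : Fin m, k < k' →
          Icc (B k) (A k.succ) ∩ Icc (B k') (A k'.succ) = ∅ := by
        intro k k' hkk
        apply disj_Icc_Icc
        have hle : k.succ ≤ k'.castSucc := by
          have hv : (k : ℕ) < (k' : ℕ) := hkk
          rw [Fin.le_def, Fin.val_succ, Fin.coe_castSucc]
          omega
        calc A k.succ ≤ A k'.castSucc := hA.monotone hle
          _ < B k' := h1 k'
      rcases Fin.eq_zero_or_eq_succ i with rfl | ⟨k, rfl⟩ <;>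
        rcases Fin.eq_zero_or_eq_succ j with rfl | ⟨k', rfl⟩
      · exact absurd rfl hne
      · simp only [Fin.cases_zero, Fin.cases_succ]; exact main k'
      · simp only [Fin.cases_zero, Fin.cases_succ]; exact inter_symm_empty (main k)
      · simp only [Fin.cases_succ]
        have hkk : k ≠ k' := fun h => hne (by rw [h])
        rcases hkk.lt_or_gt with h | h
        · exact succ_succ k k' h
        · exact inter_symm_empty (succ_succ k' k h)

/-- Case D: l₁ = m zeros, l₂ = m+1 poles, pattern b a b ... a b. -/
lemma buildD (γ : ℝ) (hγ : γ ≠ 0) (m : ℕ) (A : Fin m → ℝ) (B : Fin (m + 1) → ℝ)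
    (hA : StrictMono A) (hB : StrictMono B)
    (h1 : ∀ j : Fin m, B j.castSucc < A j)
    (h2 : ∀ j : Fin m, A j < B j.succ) :
    ∃ (γs : Fin (m + 1) → ℝ) (aos bos : Fin (m + 1) → Option ℝ),
      (∀ i, γs i ≠ 0) ∧
      (∀ i, ¬(aos i = none ∧ bos i = none)) ∧
      (∀ i, aos i ≠ bos i) ∧
      (∀ z : ℂ, z.im ≠ 0 →
        (γ : ℂ) * (∏ i, (z - (A i : ℂ))) / (∏ j, (z - (B j : ℂ))) =
          ∏ i, sFun (γs i) (aos i) (bos i) z) ∧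
      (∀ i j, i ≠ j →
        closure {x : ℝ | sFiniteAt (bos i) x ∧ sFunR (γs i) (aos i) (bos i) x ≤ 0} ∩
          closure {x : ℝ | sFiniteAt (bos j) x ∧ sFunR (γs j) (aos j) (bos j) x ≤ 0} = ∅) := by
  set γs : Fin (m + 1) → ℝ := Fin.cases γ (fun _ => 1) with hγs
  have hγs0 : γs 0 = γ := rfl
  have hγss : ∀ j : Fin m, γs j.succ = 1 := fun j => rfl
  have hγsne : ∀ i, γs i ≠ 0 := by
    intro i
    refine Fin.cases ?_ ?_ i
    · rw [hγs0]; exact hγ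
    · intro j; rw [hγss]; exact one_ne_zero
  have eaos : (∀ z : ℂ, (∏ i, linC ((Fin.cases none (fun j => some (A j)) :
      Fin (m+1) → Option ℝ) i) z) = ∏ j, (z - (A j : ℂ))) := by
    intro z
    rw [Fin.prod_univ_succ]
    simp [linC]
  rcases hγ.lt_or_gt with hneg | hpos
  · -- γ < 0 : single pole B last (rightmost), pairs (B j.castSucc, A j)
    refine ⟨γs, Fin.cases none (fun j => some (A j)),
      Fin.cases (some (B (Fin.last m))) (fun j => some (B j.castSucc)),
      hγsne, ?_, ?_, ?_, ?_⟩
    · intro i; refine Fin.cases ?_ ?_ i <;> simp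
    · intro i
      refine Fin.cases ?_ ?_ i
      · simp
      · intro j
        simp only [Fin.cases_succ, ne_eq, Option.some.injEq]
        exact fun h => (h1 j).ne (by rw [h])
    · intro z hz
      rw [prod_sFun_eq, prod_gammas]
      have e2 : (∏ i, linC ((Fin.cases (some (B (Fin.last m)))
          (fun j => some (B j.castSucc)) : Fin (m+1) → Option ℝ) i) z)
          = ∏ i, (z - (B i : ℂ)) := by
        rw [Fin.prod_univ_succ]
        simp only [Fin.cases_zero, Fin.cases_succ]
        rw [Fin.prod_univ_castSucc (f := fun i => z - (B i : ℂ))]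
        simp only [linC]
        ring
      rw [eaos, e2]
    · have key : ∀ i : Fin (m + 1),
          closure {x : ℝ | sFiniteAt ((Fin.cases (some (B (Fin.last m)))
              (fun j => some (B j.castSucc)) : Fin (m+1) → Option ℝ) i) x ∧
            sFunR (γs i) ((Fin.cases none (fun j => some (A j)) : Fin (m+1) → Option ℝ) i)
              ((Fin.cases (some (B (Fin.last m)))
                (fun j => some (B j.castSucc)) : Fin (m+1) → Option ℝ) i) x ≤ 0}
          = (Fin.cases (Ici (B (Fin.last m)))
              (fun j => Icc (B j.castSucc) (A j)) : Fin (m+1) → Set ℝ) i := by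
        intro i
        refine Fin.cases ?_ ?_ i
        · simp only [Fin.cases_zero, hγs0]
          exact Dclos_qn hneg
        · intro j
          simp only [Fin.cases_succ, hγss]
          exact Dclos_pp' one_pos (h1 j)
      intro i j hne
      rw [key i, key j]
      have main : ∀ k : Fin m, Ici (B (Fin.last m)) ∩ Icc (B k.castSucc) (A k) = ∅ := by
        intro k
        exact inter_symm_empty (disj_Icc_Ici (lt_of_lt_of_le (h2 k) (hB.monotone (Fin.le_last _))))
      have succ_succ : ∀ k k' : Fin m, k < k' →
          Icc (B k.castSucc) (A k) ∩ Icc (B k'.castSucc) (A k') = ∅ := by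
        intro k k' hkk
        apply disj_Icc_Icc
        have hle : k.succ ≤ k'.castSucc := by
          have hv : (k : ℕ) < (k' : ℕ) := hkk
          rw [Fin.le_def, Fin.val_succ, Fin.coe_castSucc]
          omega
        calc A k < B k.succ := h2 k
          _ ≤ B k'.castSucc := hB.monotone hle
      rcases Fin.eq_zero_or_eq_succ i with rfl | ⟨k, rfl⟩ <;>
        rcases Fin.eq_zero_or_eq_succ j with rfl | ⟨k', rfl⟩
      · exact absurd rfl hne
      · simp only [Fin.cases_zero, Fin.cases_succ]; exact main k'
      · simp only [Fin.cases_zero, Fin.cases_succ]; exact inter_symm_empty (main k)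
      · simp only [Fin.cases_succ]
        have hkk : k ≠ k' := fun h => hne (by rw [h])
        rcases hkk.lt_or_gt with h | h
        · exact succ_succ k k' h
        · exact inter_symm_empty (succ_succ k' k h)
  · -- γ > 0 : single pole B 0 (leftmost), pairs (A j, B j.succ)
    refine ⟨γs, Fin.cases none (fun j => some (A j)), fun i => some (B i),
      hγsne, ?_, ?_, ?_, ?_⟩
    · intro i; refine Fin.cases ?_ ?_ i <;> simp
    · intro i
      refine Fin.cases ?_ ?_ i
      · simp
      · intro j
        simp only [Fin.cases_succ, ne_eq, Option.some.injEq]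
        exact fun h => (h2 j).ne (by rw [h])
    · intro z hz
      rw [prod_sFun_eq, prod_gammas]
      have e2 : (∏ i, linC (some (B i)) z) = ∏ i, (z - (B i : ℂ)) := by
        simp [linC]
      rw [eaos, e2]
    · have key : ∀ i : Fin (m + 1),
          closure {x : ℝ | sFiniteAt (some (B i)) x ∧
            sFunR (γs i) ((Fin.cases none (fun j => some (A j)) : Fin (m+1) → Option ℝ) i)
              (some (B i)) x ≤ 0}
          = (Fin.cases (Iic (B 0)) (fun j => Icc (A j) (B j.succ)) : Fin (m+1) → Set ℝ) i := by
        intro i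
        refine Fin.cases ?_ ?_ i
        · simp only [Fin.cases_zero, hγs0]
          exact Dclos_qp hpos
        · intro j
          simp only [Fin.cases_succ, hγss]
          exact Dclos_pp one_pos (h2 j)
      intro i j hne
      rw [key i, key j]
      have main : ∀ k : Fin m, Iic (B 0) ∩ Icc (A k) (B k.succ) = ∅ := by
        intro k
        exact disj_Iic_Icc (lt_of_le_of_lt (hB.monotone (Fin.zero_le _)) (h1 k))
      have succ_succ : ∀ k k' : Fin m, k < k' →
          Icc (A k) (B k.succ) ∩ Icc (A k') (B k'.succ) = ∅ := by
        intro k k' hkk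
        apply disj_Icc_Icc
        have hle : k.succ ≤ k'.castSucc := by
          have hv : (k : ℕ) < (k' : ℕ) := hkk
          rw [Fin.le_def, Fin.val_succ, Fin.coe_castSucc]
          omega
        calc B k.succ ≤ B k'.castSucc := hB.monotone hle
          _ < A k' := h1 k'
      rcases Fin.eq_zero_or_eq_succ i with rfl | ⟨k, rfl⟩ <;>
        rcases Fin.eq_zero_or_eq_succ j with rfl | ⟨k', rfl⟩
      · exact absurd rfl hne
      · simp only [Fin.cases_zero, Fin.cases_succ]; exact main k'
      · simp only [Fin.cases_zero, Fin.cases_succ]; exact inter_symm_empty (main k)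
      · simp only [Fin.cases_succ]
        have hkk : k ≠ k' := fun h => hne (by rw [h])
        rcases hkk.lt_or_gt with h | h
        · exact succ_succ k k' h
        · exact inter_symm_empty (succ_succ k' k h)

end Statement14Aux

/-- a simple symmetric rational function
`s(z) = γ ∏ (z - aᵢ) / ∏ (z - bⱼ)` of degree `n = max l₁ l₂ ≥ 1` with real, simple and
interlacing zeros and poles admits a factorization `s = ∏ sᵢ` into degree-one real
rational factors `sᵢ = γᵢ (z - aᵢ')/(z - bᵢ')` (zeros/poles in `ℝ ∪ {∞}`) such that the
closed sets `Dᵢ⁻ = clos {x ∈ ℝ : sᵢ(x) ≤ 0}` are pairwise disjoint. -/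
theorem statement14 (γ : ℝ) (hγ : γ ≠ 0) (l₁ l₂ : ℕ)
    (a : Fin l₁ → ℝ) (b : Fin l₂ → ℝ)
    (ha : Function.Injective a) (hb : Function.Injective b)
    (hab : ∀ i j, a i ≠ b j)
    (hint₁ : ∀ i i' : Fin l₁, a i < a i' → ∃ j, a i < b j ∧ b j < a i')
    (hint₂ : ∀ j j' : Fin l₂, b j < b j' → ∃ i, b j < a i ∧ a i < b j')
    (hn : 1 ≤ max l₁ l₂) :
    ∃ (γs : Fin (max l₁ l₂) → ℝ) (aos bos : Fin (max l₁ l₂) → Option ℝ),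
      (∀ i, γs i ≠ 0) ∧
      (∀ i, ¬ (aos i = none ∧ bos i = none)) ∧
      (∀ i, aos i ≠ bos i) ∧
      (∀ z : ℂ, z.im ≠ 0 →
        (γ : ℂ) * (∏ i, (z - (a i : ℂ))) / (∏ j, (z - (b j : ℂ))) =
          ∏ i, sFun (γs i) (aos i) (bos i) z) ∧
      (∀ i j, i ≠ j →
        closure {x : ℝ | sFiniteAt (bos i) x ∧ sFunR (γs i) (aos i) (bos i) x ≤ 0} ∩
          closure {x : ℝ | sFiniteAt (bos j) x ∧ sFunR (γs j) (aos j) (bos j) x ≤ 0} =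
            ∅) := by
  set σ : Equiv.Perm (Fin l₁) := Tuple.sort a with hσdef
  set τ : Equiv.Perm (Fin l₂) := Tuple.sort b with hτdef
  set A' : Fin l₁ → ℝ := a ∘ ⇑σ with hA'def
  set B' : Fin l₂ → ℝ := b ∘ ⇑τ with hB'def
  have hA' : StrictMono A' :=
    (Tuple.monotone_sort a).strictMono_of_injective (ha.comp σ.injective)
  have hB' : StrictMono B' :=
    (Tuple.monotone_sort b).strictMono_of_injective (hb.comp τ.injective)
  have hab' : ∀ i j, A' i ≠ B' j := fun i j => hab _ _
  have h1' : ∀ i i', A' i < A' i' → ∃ j, A' i < B' j ∧ B' j < A' i' := by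
    intro i i' h
    obtain ⟨j, hj1, hj2⟩ := hint₁ (σ i) (σ i') h
    refine ⟨τ.symm j, ?_, ?_⟩
    · show A' i < b (τ (τ.symm j)); rwa [Equiv.apply_symm_apply]
    · show b (τ (τ.symm j)) < A' i'; rwa [Equiv.apply_symm_apply]
  have h2' : ∀ j j', B' j < B' j' → ∃ i, B' j < A' i ∧ A' i < B' j' := by
    intro j j' h
    obtain ⟨i, hi1, hi2⟩ := hint₂ (τ j) (τ j') h
    refine ⟨σ.symm i, ?_, ?_⟩
    · show B' j < a (σ (σ.symm i)); rwa [Equiv.apply_symm_apply]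
    · show a (σ (σ.symm i)) < B' j'; rwa [Equiv.apply_symm_apply]
  have hab'' : ∀ j i, B' j ≠ A' i := fun j i => (hab' i j).symm
  have hprod_a : ∀ z : ℂ, (∏ i, (z - (a i : ℂ))) = ∏ i, (z - (A' i : ℂ)) :=
    fun z => (Equiv.prod_comp σ (fun i => z - ((a i : ℝ) : ℂ))).symm
  have hprod_b : ∀ z : ℂ, (∏ j, (z - (b j : ℂ))) = ∏ j, (z - (B' j : ℂ)) :=
    fun z => (Equiv.prod_comp τ (fun j => z - ((b j : ℝ) : ℂ))).symm
  have finish : ∀ (n : ℕ) (hmax : max l₁ l₂ = n),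
      (∃ (γs : Fin n → ℝ) (aos bos : Fin n → Option ℝ),
        (∀ i, γs i ≠ 0) ∧
        (∀ i, ¬ (aos i = none ∧ bos i = none)) ∧
        (∀ i, aos i ≠ bos i) ∧
        (∀ z : ℂ, z.im ≠ 0 →
          (γ : ℂ) * (∏ i, (z - (A' i : ℂ))) / (∏ j, (z - (B' j : ℂ))) =
            ∏ i, sFun (γs i) (aos i) (bos i) z) ∧
        (∀ i j, i ≠ j →
          closure {x : ℝ | sFiniteAt (bos i) x ∧ sFunR (γs i) (aos i) (bos i) x ≤ 0} ∩
            closure {x : ℝ | sFiniteAt (bos j) x ∧ sFunR (γs j) (aos j) (bos j) x ≤ 0} =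
              ∅)) →
      (∃ (γs : Fin (max l₁ l₂) → ℝ) (aos bos : Fin (max l₁ l₂) → Option ℝ),
        (∀ i, γs i ≠ 0) ∧
        (∀ i, ¬ (aos i = none ∧ bos i = none)) ∧
        (∀ i, aos i ≠ bos i) ∧
        (∀ z : ℂ, z.im ≠ 0 →
          (γ : ℂ) * (∏ i, (z - (a i : ℂ))) / (∏ j, (z - (b j : ℂ))) =
            ∏ i, sFun (γs i) (aos i) (bos i) z) ∧
        (∀ i j, i ≠ j →
          closure {x : ℝ | sFiniteAt (bos i) x ∧ sFunR (γs i) (aos i) (bos i) x ≤ 0} ∩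
            closure {x : ℝ | sFiniteAt (bos j) x ∧ sFunR (γs j) (aos j) (bos j) x ≤ 0} =
              ∅)) := by
    intro n hmax hex
    subst hmax
    obtain ⟨γs, aos, bos, c1, c2, c3, c4, c5⟩ := hex
    refine ⟨γs, aos, bos, c1, c2, c3, ?_, c5⟩
    intro z hz
    rw [hprod_a z, hprod_b z]
    exact c4 z hz
  rcases Nat.eq_zero_or_pos l₂ with rfl | hq0
  · -- no poles: l₁ = 1
    obtain ⟨-, -, hple, -⟩ := interlace_aux l₁ 0 A' B' hA' hB' h1' h2' hab'
      (fun hp hq => absurd hq (lt_irrefl 0))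
    rw [Nat.max_zero] at hn ⊢
    have hl1 : l₁ = 1 := by omega
    subst hl1
    refine finish 1 (by omega) ?_
    exact buildC γ hγ 0 A' B' hA' hB' (fun j => j.elim0) (fun j => j.elim0)
  · rcases Nat.eq_zero_or_pos l₁ with rfl | hp0
    · -- no zeros: l₂ = 1
      obtain ⟨-, -, hple, -⟩ := interlace_aux l₂ 0 B' A' hB' hA' h2' h1' hab''
        (fun hp hq => absurd hq (lt_irrefl 0))
      have hl2 : l₂ = 1 := by omega
      subst hl2
      refine finish 1 (by omega) ?_
      exact buildD γ hγ 0 A' B' hA' hB' (fun j => j.elim0) (fun j => j.elim0)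
    · rcases lt_or_gt_of_ne (hab' ⟨0, hp0⟩ ⟨0, hq0⟩) with hfirst | hfirst
      · -- first point is a zero
        obtain ⟨L1, L2, hple, hqle⟩ := interlace_aux l₁ l₂ A' B' hA' hB' h1' h2' hab'
          (fun hp hq => hfirst)
        rcases eq_or_lt_of_le (hqle hp0) with heq | hlt
        · -- l₂ = l₁ : case A
          obtain ⟨m, rfl⟩ : ∃ m, l₁ = m + 1 := ⟨l₁ - 1, by omega⟩
          subst heq
          refine finish (m + 1) (by omega) ?_
          refine buildA γ hγ m A' B' hA' hB' hab' (fun i => L1 i i.2 i.2) ?_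
          intro i j hij
          have hij' : (i : ℕ) < (j : ℕ) := hij
          have h2 := L2 i i.2 (by omega)
          have hle : A' ⟨(i : ℕ) + 1, by omega⟩ ≤ A' j :=
            hA'.monotone (by rw [Fin.le_def]; exact hij')
          exact lt_of_lt_of_le h2 hle
        · -- l₁ = l₂ + 1 : case C
          obtain rfl : l₁ = l₂ + 1 := by omega
          refine finish (l₂ + 1) (by omega) ?_
          exact buildC γ hγ l₂ A' B' hA' hB'
            (fun j => L1 j j.2 (by omega)) (fun j => L2 j j.2 (by omega))
      · -- first point is a pole
        obtain ⟨L1, L2, hple, hqle⟩ := interlace_aux l₂ l₁ B' A' hB' hA' h2' h1' hab''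
          (fun hp hq => hfirst)
        rcases eq_or_lt_of_le (hqle hq0) with heq | hlt
        · -- l₁ = l₂ : case B
          obtain ⟨m, rfl⟩ : ∃ m, l₂ = m + 1 := ⟨l₂ - 1, by omega⟩
          subst heq
          refine finish (m + 1) (by omega) ?_
          refine buildB γ hγ m A' B' hA' hB' hab' (fun i => L1 i i.2 i.2) ?_
          intro i j hij
          have hij' : (i : ℕ) < (j : ℕ) := hij
          have h2 := L2 i i.2 (by omega)
          have hle : B' ⟨(i : ℕ) + 1, by omega⟩ ≤ B' j :=
            hB'.monotone (by rw [Fin.le_def]; exact hij')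
          exact lt_of_lt_of_le h2 hle
        · -- l₂ = l₁ + 1 : case D
          obtain rfl : l₂ = l₁ + 1 := by omega
          refine finish (l₁ + 1) (by omega) ?_
          exact buildD γ hγ l₁ A' B' hA' hB'
            (fun j => L1 j j.2 (by omega)) (fun j => L2 j j.2 (by omega))
end
end
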